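/- arXiv:2007.10386 — 4 statements merged into one kernel-verified Lean document; each statement's English description precedes it below -/
import Mathlib

section
/- Let m ≥ 1 be an integer, 0 < q < 1, |ξ| < π/2 and 0 ≤ γ < 1. If [ sec ξ + (1-γ) ] · m(m+1) q² / (1-q)² + [ 2 sec ξ + 4(1-γ) ] · m q / (1-q) + 2(1-γ) · ( 1 - (1-q)^m ) ≤ 1 - γ, then the Pascal distribution series Θ_q^m belongs to the class 𝒦(ξ, γ). -/
noncomputable section

open Complex Real Set

/-- The open unit disk in the complex plane. -/
def unitDisk : Set ℂ := Metric.ball 0 1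

/-- The class 𝒜 of normalized analytic functions on the unit disk:
`f` analytic on `𝔻`, `f 0 = 0`, `f' 0 = 1`. -/
def NormalizedAnalytic (f : ℂ → ℂ) : Prop :=
  AnalyticOn ℂ f unitDisk ∧ f 0 = 0 ∧ deriv f 0 = 1

/-- The spirallike class `𝒮(ξ, γ, ρ)`. -/
def SpiralS (ξ γ ρ : ℝ) (f : ℂ → ℂ) : Prop :=
  NormalizedAnalytic f ∧ Set.InjOn f unitDisk ∧
    ∀ z ∈ unitDisk, z ≠ 0 →
      (1 - (ρ : ℂ)) * f z + (ρ : ℂ) * z * deriv f z ≠ 0 ∧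
      γ * Real.cos ξ <
        (Complex.exp (Complex.I * ξ) * (z * deriv f z) /
          ((1 - (ρ : ℂ)) * f z + (ρ : ℂ) * z * deriv f z)).re

/-- The convex spirallike class `𝒦(ξ, γ, ρ)`. -/
def SpiralK (ξ γ ρ : ℝ) (f : ℂ → ℂ) : Prop :=
  NormalizedAnalytic f ∧ Set.InjOn f unitDisk ∧
    ∀ z ∈ unitDisk,
      deriv f z + (ρ : ℂ) * z * deriv (deriv f) z ≠ 0 ∧
      γ * Real.cos ξ <
        (Complex.exp (Complex.I * ξ) * (z * deriv (deriv f) z + deriv f z) /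
          (deriv f z + (ρ : ℂ) * z * deriv (deriv f) z)).re

/-- The spirallike class `𝒮(ξ, γ)`. -/
def SpiralS0 (ξ γ : ℝ) (f : ℂ → ℂ) : Prop :=
  NormalizedAnalytic f ∧ Set.InjOn f unitDisk ∧
    ∀ z ∈ unitDisk, z ≠ 0 →
      f z ≠ 0 ∧
      γ * Real.cos ξ <
        (Complex.exp (Complex.I * ξ) * (z * deriv f z) / f z).re

/-- The convex spirallike class `𝒦(ξ, γ)`. -/
def SpiralK0 (ξ γ : ℝ) (f : ℂ → ℂ) : Prop :=
  NormalizedAnalytic f ∧ Set.InjOn f unitDisk ∧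
    ∀ z ∈ unitDisk,
      deriv f z ≠ 0 ∧
      γ * Real.cos ξ <
        (Complex.exp (Complex.I * ξ) *
          (1 + z * deriv (deriv f) z / deriv f z)).re

/-- The class `ℛ^τ(ϑ, δ)`. -/
def ClassR (τ : ℂ) (ϑ δ : ℝ) (f : ℂ → ℂ) : Prop :=
  NormalizedAnalytic f ∧ Set.InjOn f unitDisk ∧
    ∀ z ∈ unitDisk,
      ‖(((1 - (ϑ : ℂ)) * (if z = 0 then 1 else f z / z) + (ϑ : ℂ) * deriv f z - 1) /
          (2 * τ * (1 - (δ : ℂ)) +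
            (1 - (ϑ : ℂ)) * (if z = 0 then 1 else f z / z) + (ϑ : ℂ) * deriv f z - 1))‖ < 1

/-- The Pascal distribution series
`Θ_q^m(z) = z + ∑_{n=2}^∞ C(n+m-2, m-1) q^(n-1) (1-q)^m z^n`. -/
def pascalTheta (m : ℕ) (q : ℝ) : ℂ → ℂ := fun z =>
  z + ∑' n : ℕ, ((n + m).choose (m - 1) : ℂ) * (q : ℂ) ^ (n + 1) * (1 - (q : ℂ)) ^ m * z ^ (n + 2)

/-- The integral operator `𝒢_q^m(z) = ∫_0^z Θ_q^m(t)/t dt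
= z + ∑_{n=2}^∞ C(n+m-2, m-1) q^(n-1) (1-q)^m z^n / n`. -/
def pascalG (m : ℕ) (q : ℝ) : ℂ → ℂ := fun z =>
  z + ∑' n : ℕ, ((n + m).choose (m - 1) : ℂ) * (q : ℂ) ^ (n + 1) * (1 - (q : ℂ)) ^ m *
    z ^ (n + 2) / ((n : ℂ) + 2)

namespace Stmt12Aux

/-- real coefficients of the Pascal series (coefficient of `z^(n+2)`). -/
def b (m : ℕ) (q : ℝ) (n : ℕ) : ℝ :=
  ((n + m).choose (m - 1) : ℝ) * q ^ (n + 1) * (1 - q) ^ m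

lemma b_nonneg (m : ℕ) {q : ℝ} (hq0 : 0 < q) (hq1 : q < 1) (n : ℕ) : 0 ≤ b m q n := by
  have h1 : (0:ℝ) ≤ 1 - q := by linarith
  unfold b
  have := Nat.cast_nonneg (α := ℝ) ((n + m).choose (m - 1))
  positivity

lemma choose_id1 (m n : ℕ) (hm : 1 ≤ m) :
    (n + 1) * (n + m).choose (m - 1) = m * (n + m).choose m := by
  obtain ⟨k, rfl⟩ : ∃ k, m = k + 1 := ⟨m - 1, by omega⟩
  have h := Nat.choose_succ_right_eq (n + (k+1)) k
  simp only [Nat.add_sub_cancel] at h ⊢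
  have : n + (k+1) - k = n + 1 := by omega
  rw [this] at h
  rw [Nat.mul_comm (n+1), Nat.mul_comm (k+1)]
  exact h.symm

lemma choose_id2 (m n : ℕ) :
    n * (n + m).choose m = (m + 1) * (n + m).choose (m + 1) := by
  have h := Nat.choose_succ_right_eq (n + m) m
  have : n + m - m = n := by omega
  rw [this] at h
  rw [Nat.mul_comm n, Nat.mul_comm (m+1)]
  exact h.symm

lemma hasSum_b (m : ℕ) (hm : 1 ≤ m) {q : ℝ} (hq0 : 0 < q) (hq1 : q < 1) :
    HasSum (b m q) (1 - (1 - q) ^ m) := by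
  have hq : ‖q‖ < 1 := by rw [Real.norm_eq_abs, abs_of_pos hq0]; exact hq1
  have hp : (0:ℝ) < 1 - q := by linarith
  have base := hasSum_choose_mul_geometric_of_norm_lt_one (𝕜 := ℝ) (m - 1) hq
  -- base : HasSum (fun n => ((n + (m-1)).choose (m-1) : ℝ) * q ^ n) (1 / (1-q)^(m-1+1))
  have hm1 : m - 1 + 1 = m := by omega
  rw [hm1] at base
  have shift : HasSum (fun n => ((n + 1 + (m-1)).choose (m - 1) : ℝ) * q ^ (n+1))
      (1 / (1-q)^m - 1) := by
    have := (hasSum_nat_add_iff' (f := fun n => ((n + (m-1)).choose (m-1) : ℝ) * q ^ n) 1).mpr base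
    simpa using this
  have := shift.mul_left ((1-q)^m)
  have he : ∀ n : ℕ, (1-q)^m * (((n + 1 + (m-1)).choose (m - 1) : ℝ) * q ^ (n+1)) = b m q n := by
    intro n
    have : n + 1 + (m - 1) = n + m := by omega
    rw [this, b]; ring
  rw [funext he] at this
  convert this using 1
  · rfl
  field_simp

lemma hasSum_b1 (m : ℕ) (hm : 1 ≤ m) {q : ℝ} (hq0 : 0 < q) (hq1 : q < 1) :
    HasSum (fun n : ℕ => ((n:ℝ) + 1) * b m q n) (m * q / (1 - q)) := by
  have hq : ‖q‖ < 1 := by rw [Real.norm_eq_abs, abs_of_pos hq0]; exact hq1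
  have hp : (0:ℝ) < 1 - q := by linarith
  have base := hasSum_choose_mul_geometric_of_norm_lt_one (𝕜 := ℝ) m hq
  have := base.mul_left ((m:ℝ) * q * (1-q)^m)
  have he : ∀ n : ℕ, (m:ℝ) * q * (1-q)^m * (((n + m).choose m : ℝ) * q ^ n)
      = ((n:ℝ) + 1) * b m q n := by
    intro n
    have hc : (((n+1) * (n + m).choose (m - 1) : ℕ) : ℝ) = ((m * (n + m).choose m : ℕ) : ℝ) := by
      exact_mod_cast congrArg (Nat.cast (R := ℝ)) (choose_id1 m n hm)
    push_cast at hc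
    rw [b]
    linear_combination (- (q ^ n * q * (1 - q)^m)) * hc
  rw [funext he] at this
  convert this using 1
  · rfl
  rw [pow_succ]
  field_simp

lemma hasSum_b2 (m : ℕ) (hm : 1 ≤ m) {q : ℝ} (hq0 : 0 < q) (hq1 : q < 1) :
    HasSum (fun n : ℕ => ((n:ℝ) + 1) * n * b m q n) (m * (m+1) * q^2 / (1 - q)^2) := by
  have hq : ‖q‖ < 1 := by rw [Real.norm_eq_abs, abs_of_pos hq0]; exact hq1
  have hp : (0:ℝ) < 1 - q := by linarith
  have base := hasSum_choose_mul_geometric_of_norm_lt_one (𝕜 := ℝ) (m+1) hq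
  set φ : ℕ → ℝ := fun n => ((n + m).choose (m + 1) : ℝ) * q ^ n with hφ
  have shift : HasSum (fun n => φ (n+1)) (q * (1 / (1-q)^(m+1+1))) := by
    have := base.mul_left q
    convert this using 2 with n
    · rfl
    simp only [hφ]
    have : n + 1 + m = n + (m+1) := by omega
    rw [this, pow_succ]
    ring
  have hφ0 : φ 0 = 0 := by
    simp [hφ, Nat.choose_eq_zero_of_lt (Nat.lt_succ_self m)]
  have hsφ : HasSum φ (q * (1 / (1-q)^(m+1+1))) := by
    have := (hasSum_nat_add_iff (f := φ) 1).mp shift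
    simpa [hφ0] using this
  have := hsφ.mul_left ((m:ℝ) * (m+1) * q * (1-q)^m)
  have he : ∀ n : ℕ, (m:ℝ) * (m+1) * q * (1-q)^m * φ n
      = ((n:ℝ) + 1) * n * b m q n := by
    intro n
    have h1 : (((n+1) * (n + m).choose (m - 1) : ℕ) : ℝ) = ((m * (n + m).choose m : ℕ) : ℝ) :=
      congrArg _ (choose_id1 m n hm)
    have h2 : ((n * (n + m).choose m : ℕ) : ℝ) = (((m+1) * (n + m).choose (m + 1) : ℕ) : ℝ) :=
      congrArg _ (choose_id2 m n)
    push_cast at h1 h2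
    simp only [hφ, b]
    have key : ((n:ℝ)+1) * n * ((n + m).choose (m - 1) : ℝ)
        = (m:ℝ) * (m+1) * ((n + m).choose (m + 1) : ℝ) := by
      linear_combination (n:ℝ) * h1 + (m:ℝ) * h2
    linear_combination (- (q ^ n * q * (1 - q)^m)) * key
  rw [funext he] at this
  convert this using 1
  · rfl
  rw [pow_succ, pow_succ]
  field_simp
  ring

def c1 (m : ℕ) (q : ℝ) (n : ℕ) : ℝ := ((n : ℝ) + 2) * b m q n
def c2 (m : ℕ) (q : ℝ) (n : ℕ) : ℝ := ((n : ℝ) + 1) * c1 m q n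

def S0 (m : ℕ) (q : ℝ) (z : ℂ) : ℂ := ∑' n : ℕ, ((b m q n : ℝ) : ℂ) * z ^ (n + 2)
def S1 (m : ℕ) (q : ℝ) (z : ℂ) : ℂ := ∑' n : ℕ, ((c1 m q n : ℝ) : ℂ) * z ^ (n + 1)
def S2 (m : ℕ) (q : ℝ) (z : ℂ) : ℂ := ∑' n : ℕ, ((c2 m q n : ℝ) : ℂ) * z ^ n

/-- generic: term-by-term differentiation of `∑ u n * w ^ d n` on the unit ball. -/
lemma hasDerivAt_tsum_pow (u : ℕ → ℝ) (d : ℕ → ℕ) (hd : ∀ n, 1 ≤ d n)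
    (hsum : Summable (fun n => (d n : ℝ) * |u n|)) {z : ℂ} (hz : ‖z‖ < 1) :
    HasDerivAt (fun w : ℂ => ∑' n, (u n : ℂ) * w ^ (d n))
      (∑' n, ((d n : ℂ) * (u n : ℂ)) * z ^ (d n - 1)) z := by
  have hball : z ∈ Metric.ball (0:ℂ) 1 := by simpa [Metric.mem_ball, dist_eq_norm] using hz
  refine hasDerivAt_tsum_of_isPreconnected (u := fun n => (d n : ℝ) * |u n|)
    (g := fun n w => (u n : ℂ) * w ^ (d n))
    (g' := fun n w => ((d n : ℂ) * (u n : ℂ)) * w ^ (d n - 1))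
    (y₀ := 0) hsum Metric.isOpen_ball (convex_ball _ _).isPreconnected
    (fun n y _ => ?_) (fun n y hy => ?_) (by simp) ?_ hball
  · have h := (hasDerivAt_pow (d n) y).const_mul ((u n : ℝ) : ℂ)
    convert h using 1
    · rfl
    ring
  · have hy1 : ‖y‖ ≤ 1 := by
      have : ‖y‖ < 1 := by simpa [Metric.mem_ball, dist_eq_norm] using hy
      linarith
    calc ‖((d n : ℂ) * (u n : ℂ)) * y ^ (d n - 1)‖
        = (d n : ℝ) * |u n| * ‖y‖ ^ (d n - 1) := by
          simp [norm_mul, norm_pow, Complex.norm_natCast, Complex.norm_real]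
      _ ≤ (d n : ℝ) * |u n| * 1 := by
          refine mul_le_mul_of_nonneg_left ?_ (by positivity)
          exact pow_le_one₀ (norm_nonneg _) hy1
      _ = (d n : ℝ) * |u n| := by ring
  · have : (fun n => (u n : ℂ) * (0:ℂ) ^ (d n)) = fun _ => 0 := by
      funext n
      rw [zero_pow (Nat.one_le_iff_ne_zero.mp (hd n)), mul_zero]
    rw [this]
    exact summable_zero

lemma c1_nonneg (m : ℕ) {q : ℝ} (hq0 : 0 < q) (hq1 : q < 1) (n : ℕ) : 0 ≤ c1 m q n := by
  have := b_nonneg m hq0 hq1 n; unfold c1; positivity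

lemma c2_nonneg (m : ℕ) {q : ℝ} (hq0 : 0 < q) (hq1 : q < 1) (n : ℕ) : 0 ≤ c2 m q n := by
  have := c1_nonneg m hq0 hq1 n; unfold c2; positivity

lemma hasSum_c1 (m : ℕ) (hm : 1 ≤ m) {q : ℝ} (hq0 : 0 < q) (hq1 : q < 1) :
    HasSum (c1 m q) (m * q / (1 - q) + (1 - (1 - q) ^ m)) := by
  have h := (hasSum_b1 m hm hq0 hq1).add (hasSum_b m hm hq0 hq1)
  convert h using 2 with n
  unfold c1; ring

lemma hasSum_c2 (m : ℕ) (hm : 1 ≤ m) {q : ℝ} (hq0 : 0 < q) (hq1 : q < 1) :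
    HasSum (c2 m q)
      (m * (m+1) * q^2 / (1 - q)^2 + 2 * (m * q / (1 - q))) := by
  have h := (hasSum_b2 m hm hq0 hq1).add ((hasSum_b1 m hm hq0 hq1).mul_left 2)
  convert h using 2 with n
  unfold c2 c1; ring

lemma summable_c1 (m : ℕ) (hm : 1 ≤ m) {q : ℝ} (hq0 : 0 < q) (hq1 : q < 1) :
    Summable (c1 m q) := (hasSum_c1 m hm hq0 hq1).summable

lemma summable_c2 (m : ℕ) (hm : 1 ≤ m) {q : ℝ} (hq0 : 0 < q) (hq1 : q < 1) :
    Summable (c2 m q) := (hasSum_c2 m hm hq0 hq1).summable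

lemma hasDerivAt_S0 (m : ℕ) (hm : 1 ≤ m) {q : ℝ} (hq0 : 0 < q) (hq1 : q < 1)
    {z : ℂ} (hz : ‖z‖ < 1) :
    HasDerivAt (fun w => w + S0 m q w) (1 + S1 m q z) z := by
  have hsum : Summable (fun n => ((n + 2 : ℕ) : ℝ) * |b m q n|) := by
    refine (summable_c1 m hm hq0 hq1).congr fun n => ?_
    rw [_root_.abs_of_nonneg (b_nonneg m hq0 hq1 n)]
    unfold c1; push_cast; ring
  have h := hasDerivAt_tsum_pow (b m q) (fun n => n + 2) (fun n => Nat.le_add_left 1 (n+1)) hsum hz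
  have : (∑' n : ℕ, (((n + 2 : ℕ) : ℂ) * ((b m q n : ℝ) : ℂ)) * z ^ (n + 2 - 1))
      = S1 m q z := by
    refine tsum_congr fun n => ?_
    have h2 : n + 2 - 1 = n + 1 := by omega
    rw [h2]; unfold c1; push_cast; ring
  rw [this] at h
  exact (hasDerivAt_id z).add h

lemma hasDerivAt_S1 (m : ℕ) (hm : 1 ≤ m) {q : ℝ} (hq0 : 0 < q) (hq1 : q < 1)
    {z : ℂ} (hz : ‖z‖ < 1) :
    HasDerivAt (fun w => 1 + S1 m q w) (S2 m q z) z := by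
  have hsum : Summable (fun n => ((n + 1 : ℕ) : ℝ) * |c1 m q n|) := by
    refine (summable_c2 m hm hq0 hq1).congr fun n => ?_
    rw [_root_.abs_of_nonneg (c1_nonneg m hq0 hq1 n)]
    unfold c2; push_cast; ring
  have h := hasDerivAt_tsum_pow (c1 m q) (fun n => n + 1) (fun n => Nat.le_add_left 1 n) hsum hz
  have heq : (∑' n : ℕ, (((n + 1 : ℕ) : ℂ) * ((c1 m q n : ℝ) : ℂ)) * z ^ (n + 1 - 1))
      = S2 m q z := by
    refine tsum_congr fun n => ?_
    have h2 : n + 1 - 1 = n := by omega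
    rw [h2]; unfold c2; push_cast; ring
  rw [heq] at h
  exact ((hasDerivAt_const z (1:ℂ)).add h).congr_deriv (zero_add _)

/-- generic norm bound for `∑ u n * z ^ d n` with `‖z‖ ≤ 1`. -/
lemma norm_tsum_pow_le (u : ℕ → ℝ) (hu : ∀ n, 0 ≤ u n) (hs : Summable u) (d : ℕ → ℕ)
    {z : ℂ} (hz : ‖z‖ ≤ 1) (v : ℕ → ℝ) (hv : ∀ n, u n * ‖z‖ ^ (d n) ≤ v n)
    (hsv : Summable v) :
    ‖∑' n : ℕ, (u n : ℂ) * z ^ (d n)‖ ≤ ∑' n, v n := by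
  have hnorm : ∀ n : ℕ, ‖(u n : ℂ) * z ^ (d n)‖ = u n * ‖z‖ ^ (d n) := by
    intro n
    rw [norm_mul, norm_pow, Complex.norm_real, Real.norm_eq_abs, _root_.abs_of_nonneg (hu n)]
  have hsum_norm : Summable (fun n => ‖(u n : ℂ) * z ^ (d n)‖) := by
    refine Summable.of_nonneg_of_le (fun n => norm_nonneg _) (fun n => ?_) hsv
    rw [hnorm n]; exact hv n
  calc ‖∑' n : ℕ, (u n : ℂ) * z ^ (d n)‖ ≤ ∑' n, ‖(u n : ℂ) * z ^ (d n)‖ :=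
        norm_tsum_le_tsum_norm hsum_norm
    _ ≤ ∑' n, v n := by
        refine Summable.tsum_le_tsum (fun n => ?_) hsum_norm hsv
        rw [hnorm n]; exact hv n

lemma norm_S1_le (m : ℕ) (hm : 1 ≤ m) {q : ℝ} (hq0 : 0 < q) (hq1 : q < 1)
    {z : ℂ} (hz : ‖z‖ ≤ 1) : ‖S1 m q z‖ ≤ ∑' n, c1 m q n := by
  refine norm_tsum_pow_le _ (c1_nonneg m hq0 hq1) (hasSum_c1 m hm hq0 hq1).summable _ hz
    (c1 m q) (fun n => ?_) (hasSum_c1 m hm hq0 hq1).summable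
  have := pow_le_one₀ (norm_nonneg z) hz (n := n + 1)
  nlinarith [c1_nonneg m hq0 hq1 n, pow_nonneg (norm_nonneg z) (n+1)]

lemma norm_S1_le' (m : ℕ) (hm : 1 ≤ m) {q : ℝ} (hq0 : 0 < q) (hq1 : q < 1)
    {z : ℂ} (hz : ‖z‖ ≤ 1) : ‖S1 m q z‖ ≤ ‖z‖ * ∑' n, c1 m q n := by
  have h := norm_tsum_pow_le (c1 m q) (c1_nonneg m hq0 hq1)
    (hasSum_c1 m hm hq0 hq1).summable (fun n => n + 1) hz
    (fun n => ‖z‖ * c1 m q n) (fun n => ?_)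
    (((hasSum_c1 m hm hq0 hq1).mul_left ‖z‖).summable)
  · calc ‖S1 m q z‖ ≤ ∑' n, ‖z‖ * c1 m q n := h
      _ = ‖z‖ * ∑' n, c1 m q n := tsum_mul_left
  · show c1 m q n * ‖z‖ ^ (n + 1) ≤ ‖z‖ * c1 m q n
    have h1 : ‖z‖ ^ (n + 1) ≤ ‖z‖ := by
      calc ‖z‖ ^ (n + 1) = ‖z‖ * ‖z‖ ^ n := by ring
        _ ≤ ‖z‖ * 1 := by
            refine mul_le_mul_of_nonneg_left ?_ (norm_nonneg z)
            exact pow_le_one₀ (norm_nonneg z) hz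
        _ = ‖z‖ := mul_one _
    nlinarith [c1_nonneg m hq0 hq1 n, norm_nonneg z]

lemma norm_S2_le (m : ℕ) (hm : 1 ≤ m) {q : ℝ} (hq0 : 0 < q) (hq1 : q < 1)
    {z : ℂ} (hz : ‖z‖ ≤ 1) : ‖S2 m q z‖ ≤ ∑' n, c2 m q n := by
  refine norm_tsum_pow_le _ (c2_nonneg m hq0 hq1) (hasSum_c2 m hm hq0 hq1).summable _ hz
    (c2 m q) (fun n => ?_) (hasSum_c2 m hm hq0 hq1).summable
  have := pow_le_one₀ (norm_nonneg z) hz (n := n)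
  nlinarith [c2_nonneg m hq0 hq1 n, pow_nonneg (norm_nonneg z) n]

lemma S0_zero (m : ℕ) (q : ℝ) : S0 m q 0 = 0 := by
  unfold S0
  convert tsum_zero with n
  simp

lemma S1_zero (m : ℕ) (q : ℝ) : S1 m q 0 = 0 := by
  unfold S1
  convert tsum_zero with n
  simp

lemma norm_pow_sub_pow_le' {z1 z2 : ℂ} (h1 : ‖z1‖ ≤ 1) (h2 : ‖z2‖ ≤ 1) (k : ℕ) :
    ‖z1 ^ k - z2 ^ k‖ ≤ k * ‖z1 - z2‖ := by
  rw [← geom_sum₂_mul z1 z2 k, norm_mul]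
  have hb : ‖∑ i ∈ Finset.range k, z1 ^ i * z2 ^ (k - 1 - i)‖ ≤ k := by
    calc ‖∑ i ∈ Finset.range k, z1 ^ i * z2 ^ (k - 1 - i)‖
        ≤ ∑ i ∈ Finset.range k, ‖z1 ^ i * z2 ^ (k - 1 - i)‖ := norm_sum_le _ _
      _ ≤ ∑ _i ∈ Finset.range k, (1:ℝ) := by
          refine Finset.sum_le_sum fun i _ => ?_
          rw [norm_mul, norm_pow, norm_pow]
          calc ‖z1‖ ^ i * ‖z2‖ ^ (k - 1 - i) ≤ 1 * 1 := by
                refine mul_le_mul ?_ ?_ (by positivity) (by norm_num)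
                · exact pow_le_one₀ (norm_nonneg _) h1
                · exact pow_le_one₀ (norm_nonneg _) h2
            _ = 1 := by norm_num
      _ = k := by simp
  exact mul_le_mul_of_nonneg_right hb (norm_nonneg _)

lemma summable_S0_terms (m : ℕ) (hm : 1 ≤ m) {q : ℝ} (hq0 : 0 < q) (hq1 : q < 1)
    {z : ℂ} (hz : ‖z‖ ≤ 1) : Summable (fun n : ℕ => ((b m q n : ℝ) : ℂ) * z ^ (n + 2)) := by
  refine Summable.of_norm ?_
  refine Summable.of_nonneg_of_le (fun n => norm_nonneg _) (fun n => ?_)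
    (hasSum_b m hm hq0 hq1).summable
  rw [norm_mul, norm_pow, Complex.norm_real, Real.norm_eq_abs,
    _root_.abs_of_nonneg (b_nonneg m hq0 hq1 n)]
  have h1 : ‖z‖ ^ (n + 2) ≤ 1 := pow_le_one₀ (norm_nonneg z) hz
  nlinarith [b_nonneg m hq0 hq1 n, pow_nonneg (norm_nonneg z) (n+2)]

lemma S0_lipschitz (m : ℕ) (hm : 1 ≤ m) {q : ℝ} (hq0 : 0 < q) (hq1 : q < 1)
    {z1 z2 : ℂ} (h1 : ‖z1‖ ≤ 1) (h2 : ‖z2‖ ≤ 1) :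
    ‖S0 m q z1 - S0 m q z2‖ ≤ (∑' n, c1 m q n) * ‖z1 - z2‖ := by
  unfold S0
  rw [← Summable.tsum_sub (summable_S0_terms m hm hq0 hq1 h1) (summable_S0_terms m hm hq0 hq1 h2)]
  have hterm : ∀ n : ℕ, ‖((b m q n : ℝ) : ℂ) * z1 ^ (n + 2) - ((b m q n : ℝ) : ℂ) * z2 ^ (n + 2)‖
      ≤ c1 m q n * ‖z1 - z2‖ := by
    intro n
    rw [← mul_sub, norm_mul, Complex.norm_real, Real.norm_eq_abs,
      _root_.abs_of_nonneg (b_nonneg m hq0 hq1 n)]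
    calc b m q n * ‖z1 ^ (n+2) - z2 ^ (n+2)‖ ≤ b m q n * ((n + 2 : ℕ) * ‖z1 - z2‖) := by
          exact mul_le_mul_of_nonneg_left (norm_pow_sub_pow_le' h1 h2 (n+2)) (b_nonneg m hq0 hq1 n)
      _ = c1 m q n * ‖z1 - z2‖ := by unfold c1; push_cast; ring
  have hsum2 : Summable (fun n : ℕ => c1 m q n * ‖z1 - z2‖) :=
    (hasSum_c1 m hm hq0 hq1).summable.mul_right _
  have hsumnorm : Summable (fun n : ℕ =>
      ‖((b m q n : ℝ) : ℂ) * z1 ^ (n + 2) - ((b m q n : ℝ) : ℂ) * z2 ^ (n + 2)‖) :=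
    Summable.of_nonneg_of_le (fun n => norm_nonneg _) hterm hsum2
  calc ‖∑' n : ℕ, (((b m q n : ℝ) : ℂ) * z1 ^ (n + 2) - ((b m q n : ℝ) : ℂ) * z2 ^ (n + 2))‖
      ≤ ∑' n, ‖((b m q n : ℝ) : ℂ) * z1 ^ (n + 2) - ((b m q n : ℝ) : ℂ) * z2 ^ (n + 2)‖ :=
        norm_tsum_le_tsum_norm hsumnorm
    _ ≤ ∑' n, c1 m q n * ‖z1 - z2‖ := Summable.tsum_le_tsum hterm hsumnorm hsum2
    _ = (∑' n, c1 m q n) * ‖z1 - z2‖ := tsum_mul_right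

lemma exp_I_mul_re (ξ : ℝ) : (Complex.exp (Complex.I * ξ)).re = Real.cos ξ := by
  rw [mul_comm, Complex.exp_mul_I]
  simp [Complex.cos_ofReal_re]

lemma norm_exp_I_mul (ξ : ℝ) : ‖Complex.exp (Complex.I * ξ)‖ = 1 := by
  rw [Complex.norm_exp]
  simp

lemma key_ineq (m : ℕ) (hm : 1 ≤ m) {q : ℝ} (hq0 : 0 < q) (hq1 : q < 1)
    {ξ γ : ℝ} (hξ : |ξ| < π / 2) (hγ0 : 0 ≤ γ) (hγ1 : γ < 1)
    (h : ((Real.cos ξ)⁻¹ + (1 - γ)) * ((m : ℝ) * ((m : ℝ) + 1) * q ^ 2 / (1 - q) ^ 2)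
        + (2 * (Real.cos ξ)⁻¹ + 4 * (1 - γ)) * ((m : ℝ) * q / (1 - q))
        + 2 * (1 - γ) * (1 - (1 - q) ^ m) ≤ 1 - γ) :
    (∑' n, c2 m q n) + ((1 - γ) * Real.cos ξ) * (∑' n, c1 m q n)
      ≤ (1 - γ) * Real.cos ξ := by
  have hξ' := abs_lt.mp hξ
  have hs : 0 < Real.cos ξ := Real.cos_pos_of_mem_Ioo ⟨by linarith [hξ'.1], hξ'.2⟩
  rw [(hasSum_c2 m hm hq0 hq1).tsum_eq, (hasSum_c1 m hm hq0 hq1).tsum_eq]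
  set s := Real.cos ξ with hsdef
  set M2 : ℝ := (m : ℝ) * ((m : ℝ) + 1) * q ^ 2 / (1 - q) ^ 2 with hM2
  set M1 : ℝ := (m : ℝ) * q / (1 - q) with hM1
  set M0 : ℝ := 1 - (1 - q) ^ m with hM0
  have hp : (0:ℝ) < 1 - q := by linarith
  have hM0n : 0 ≤ M0 := by
    have : (1 - q) ^ m ≤ 1 := pow_le_one₀ hp.le (by linarith)
    simp only [hM0]; linarith
  have hM1n : 0 ≤ M1 := by positivity
  have hM2n : 0 ≤ M2 := by positivity
  have hmul := mul_le_mul_of_nonneg_right h hs.le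
  have expand : ((s⁻¹ + (1 - γ)) * M2 + (2 * s⁻¹ + 4 * (1 - γ)) * M1
      + 2 * (1 - γ) * M0) * s
      = (M2 + 2 * M1) + (1 - γ) * s * (M2 + 4 * M1 + 2 * M0) := by
    field_simp
    ring
  rw [expand] at hmul
  have hcn : 0 ≤ (1 - γ) * s := by
    have : (0:ℝ) ≤ 1 - γ := by linarith
    positivity
  have hmono : (1 - γ) * s * (M1 + M0) ≤ (1 - γ) * s * (M2 + 4 * M1 + 2 * M0) := by
    refine mul_le_mul_of_nonneg_left ?_ hcn
    linarith
  linarith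

end Stmt12Aux

open Stmt12Aux in
/-- Corollary 2, `Θ_q^m ∈ 𝒦(ξ, γ)`. -/
theorem stmt12 (m : ℕ) (hm : 1 ≤ m) (q : ℝ) (hq0 : 0 < q) (hq1 : q < 1)
    (ξ γ : ℝ) (hξ : |ξ| < π / 2) (hγ0 : 0 ≤ γ) (hγ1 : γ < 1)
    (h : ((Real.cos ξ)⁻¹ + (1 - γ)) * ((m : ℝ) * ((m : ℝ) + 1) * q ^ 2 / (1 - q) ^ 2)
        + (2 * (Real.cos ξ)⁻¹ + 4 * (1 - γ)) * ((m : ℝ) * q / (1 - q))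
        + 2 * (1 - γ) * (1 - (1 - q) ^ m) ≤ 1 - γ) :
    SpiralK0 ξ γ (pascalTheta m q) := by
  have hξ' := abs_lt.mp hξ
  have hs : 0 < Real.cos ξ := Real.cos_pos_of_mem_Ioo ⟨by linarith [hξ'.1], hξ'.2⟩
  set c : ℝ := (1 - γ) * Real.cos ξ with hcdef
  have hc : 0 < c := by
    have : (0:ℝ) < 1 - γ := by linarith
    positivity
  set A : ℝ := ∑' n, c1 m q n with hAdef
  set B : ℝ := ∑' n, c2 m q n with hBdef
  have key : B + c * A ≤ c := key_ineq m hm hq0 hq1 hξ hγ0 hγ1 h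
  have hA0 : 0 ≤ A := tsum_nonneg (c1_nonneg m hq0 hq1)
  have hB0 : 0 ≤ B := tsum_nonneg (c2_nonneg m hq0 hq1)
  have hAB : A ≤ B := by
    refine Summable.tsum_le_tsum (fun n => ?_) (hasSum_c1 m hm hq0 hq1).summable
      (hasSum_c2 m hm hq0 hq1).summable
    have h1 := c1_nonneg m hq0 hq1 n
    unfold c2
    nlinarith [Nat.cast_nonneg (α := ℝ) n]
  have hA1 : A < 1 := by nlinarith
  -- rewrite pascalTheta
  have Feq : pascalTheta m q = fun z => z + S0 m q z := by
    funext z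
    unfold pascalTheta S0 b
    congr 1
    refine tsum_congr fun n => ?_
    push_cast
    ring
  have hball : ∀ z ∈ unitDisk, ‖z‖ < 1 := by
    intro z hz
    simpa [unitDisk, Metric.mem_ball, dist_eq_norm] using hz
  have hopen : IsOpen unitDisk := Metric.isOpen_ball
  have hds : ∀ z ∈ unitDisk, HasDerivAt (pascalTheta m q) (1 + S1 m q z) z := by
    intro z hz
    rw [Feq]
    exact hasDerivAt_S0 m hm hq0 hq1 (hball z hz)
  have hderiv : ∀ z ∈ unitDisk, deriv (pascalTheta m q) z = 1 + S1 m q z :=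
    fun z hz => (hds z hz).deriv
  have hderiv2 : ∀ z ∈ unitDisk, deriv (deriv (pascalTheta m q)) z = S2 m q z := by
    intro z hz
    have ev : deriv (pascalTheta m q) =ᶠ[nhds z] fun w => 1 + S1 m q w :=
      Filter.eventuallyEq_of_mem (hopen.mem_nhds hz) (fun w hw => hderiv w hw)
    rw [ev.deriv_eq]
    exact (hasDerivAt_S1 m hm hq0 hq1 (hball z hz)).deriv
  have h0mem : (0:ℂ) ∈ unitDisk := by
    simp [unitDisk, Metric.mem_ball]
  refine ⟨⟨?_, ?_, ?_⟩, ?_, ?_⟩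
  · -- AnalyticOn
    refine DifferentiableOn.analyticOn (fun z hz => ?_) hopen
    exact ((hds z hz).differentiableAt).differentiableWithinAt
  · rw [Feq]
    simp [S0_zero]
  · rw [hderiv 0 h0mem, S1_zero]
    norm_num
  · -- InjOn
    intro z1 hz1 z2 hz2 hfeq
    by_contra hne
    have hr1 : ‖z1‖ ≤ 1 := (hball z1 hz1).le
    have hr2 : ‖z2‖ ≤ 1 := (hball z2 hz2).le
    rw [Feq] at hfeq
    simp only at hfeq
    have hdiff : z1 - z2 = S0 m q z2 - S0 m q z1 := by
      have : z1 + S0 m q z1 = z2 + S0 m q z2 := hfeq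
      linear_combination this
    have hlip := S0_lipschitz m hm hq0 hq1 hr2 hr1
    have hpos : 0 < ‖z1 - z2‖ := by
      rw [norm_pos_iff]
      exact sub_ne_zero_of_ne hne
    rw [norm_sub_rev (z2 : ℂ) z1] at hlip
    rw [← hdiff] at hlip
    nlinarith
  · -- the pointwise conditions
    intro z hz
    have hr : ‖z‖ < 1 := hball z hz
    have hr0 : 0 ≤ ‖z‖ := norm_nonneg z
    have hS1A : ‖S1 m q z‖ ≤ A := norm_S1_le m hm hq0 hq1 hr.le
    have hS1r : ‖S1 m q z‖ ≤ ‖z‖ * A := norm_S1_le' m hm hq0 hq1 hr.le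
    have hS2B : ‖S2 m q z‖ ≤ B := norm_S2_le m hm hq0 hq1 hr.le
    have hFlower : 1 - ‖S1 m q z‖ ≤ ‖1 + S1 m q z‖ := by
      have h1 := norm_sub_le (1 + S1 m q z) (S1 m q z)
      have h2 : (1 + S1 m q z) - S1 m q z = 1 := by ring
      rw [h2, norm_one] at h1
      linarith
    have hFpos : 0 < ‖1 + S1 m q z‖ := by linarith
    have hFne : (1 : ℂ) + S1 m q z ≠ 0 := by
      intro hcon
      rw [hcon, norm_zero] at hFpos
      exact lt_irrefl 0 hFpos
    constructor
    · rw [hderiv z hz]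
      exact hFne
    · rw [hderiv z hz, hderiv2 z hz]
      set w : ℂ := z * S2 m q z / (1 + S1 m q z) with hwdef
      have hwnorm : ‖w‖ < c := by
        rw [hwdef, norm_div, norm_mul, div_lt_iff₀ hFpos]
        have q1 : ‖z‖ * ‖S2 m q z‖ ≤ ‖z‖ * B :=
          mul_le_mul_of_nonneg_left hS2B hr0
        have q2 : ‖z‖ * B ≤ ‖z‖ * (c - c * A) :=
          mul_le_mul_of_nonneg_left (by linarith) hr0
        have e3 : ‖z‖ * (c - c * A) = ‖z‖ * c - ‖z‖ * (c * A) := by ring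
        have p2 : c * ‖S1 m q z‖ ≤ c * (‖z‖ * A) :=
          mul_le_mul_of_nonneg_left hS1r hc.le
        have p4 : c * (1 - ‖S1 m q z‖) ≤ c * ‖1 + S1 m q z‖ :=
          mul_le_mul_of_nonneg_left hFlower hc.le
        have e4 : c * (1 - ‖S1 m q z‖) = c - c * ‖S1 m q z‖ := by ring
        have e : ‖z‖ * (c * A) = c * (‖z‖ * A) := by ring
        have e2 : ‖z‖ * c = c * ‖z‖ := by ring
        have p5 : c * ‖z‖ < c * 1 := by
          exact mul_lt_mul_of_pos_left hr hc
        have p6 : c * 1 = c := mul_one c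
        linarith
      have hexpand : Complex.exp (Complex.I * ξ) * (1 + w)
          = Complex.exp (Complex.I * ξ) + Complex.exp (Complex.I * ξ) * w := by ring
      rw [hexpand, Complex.add_re, exp_I_mul_re]
      have hre : -(‖Complex.exp (Complex.I * ξ) * w‖)
          ≤ (Complex.exp (Complex.I * ξ) * w).re := by
        have := Complex.abs_re_le_norm (Complex.exp (Complex.I * ξ) * w)
        have := (abs_le.mp this).1
        linarith [this]
      have hnw : ‖Complex.exp (Complex.I * ξ) * w‖ = ‖w‖ := by
        rw [norm_mul, norm_exp_I_mul, one_mul]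
      rw [hnw] at hre
      have : γ * Real.cos ξ < Real.cos ξ - ‖w‖ := by
        rw [hcdef] at hwnorm
        have e : (1 - γ) * Real.cos ξ = Real.cos ξ - γ * Real.cos ξ := by ring
        linarith
      linarith
end
end

section
/- Let m ≥ 1 be an integer, 0 < q < 1, |ξ| < π/2 and 0 ≤ γ < 1. If q m sec ξ / (1-q)^{m+1} ≤ 1 - γ, then the integral operator 𝒢_q^m(z) = ∫_0^z Θ_q^m(t)/t dt belongs to the class 𝒦(ξ, γ). -/
noncomputable section

open Complex Real Set

/-! ### Auxiliary machinery for `stmt15` -/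

/-- Real coefficients of the Pascal series. -/
def st15dd (m : ℕ) (q : ℝ) (n : ℕ) : ℝ :=
  ((n + m).choose (m - 1) : ℝ) * q ^ (n + 1) * (1 - q) ^ m

lemma st15dd_nonneg {m : ℕ} {q : ℝ} (hq0 : 0 ≤ q) (hq1 : q ≤ 1) (n : ℕ) :
    0 ≤ st15dd m q n := by
  have h1 : (0:ℝ) ≤ 1 - q := by linarith
  unfold st15dd
  positivity

lemma st15coeff_eq (m : ℕ) (q : ℝ) (n : ℕ) :
    ((n + m).choose (m - 1) : ℂ) * (q : ℂ) ^ (n + 1) * (1 - (q : ℂ)) ^ m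
      = ((st15dd m q n : ℝ) : ℂ) := by
  unfold st15dd
  push_cast
  ring

lemma st15hasSum_dd {m : ℕ} (hm : 1 ≤ m) {q : ℝ} (hq0 : 0 < q) (hq1 : q < 1) :
    HasSum (st15dd m q) (1 - (1 - q) ^ m) := by
  have hq : ‖q‖ < 1 := by rw [Real.norm_eq_abs, abs_of_pos hq0]; exact hq1
  have h1q : (0:ℝ) < 1 - q := by linarith
  have h1qm : (0:ℝ) < (1 - q) ^ m := pow_pos h1q m
  have base : HasSum (fun n : ℕ => (((n + (m - 1)).choose (m - 1) : ℕ) : ℝ) * q ^ n)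
      (1 / (1 - q) ^ m) := by
    have := hasSum_choose_mul_geometric_of_norm_lt_one (𝕜 := ℝ) (m - 1) hq
    rwa [Nat.sub_add_cancel hm] at this
  have base1 : HasSum
      (fun n : ℕ => (((n + 1 + (m - 1)).choose (m - 1) : ℕ) : ℝ) * q ^ (n + 1))
      (1 / (1 - q) ^ m - 1) := by
    refine (hasSum_nat_add_iff
      (f := fun n : ℕ => (((n + (m - 1)).choose (m - 1) : ℕ) : ℝ) * q ^ n) 1).2 ?_
    convert base using 1
    · rfl
    simp
  have base2 := base1.mul_left ((1 - q) ^ m)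
  have hfun : (fun n : ℕ =>
      (1 - q) ^ m * ((((n + 1 + (m - 1)).choose (m - 1) : ℕ) : ℝ) * q ^ (n + 1)))
      = st15dd m q := by
    funext n
    have hnm : n + 1 + (m - 1) = n + m := by omega
    rw [hnm]
    unfold st15dd
    ring
  rw [hfun] at base2
  convert base2 using 1
  · rfl
  field_simp

lemma st15hasSum_dd' {m : ℕ} (hm : 1 ≤ m) {q : ℝ} (hq0 : 0 < q) (hq1 : q < 1) :
    HasSum (fun n : ℕ => ((n : ℝ) + 1) * st15dd m q n) ((m : ℝ) * q / (1 - q)) := by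
  have hq : ‖q‖ < 1 := by rw [Real.norm_eq_abs, abs_of_pos hq0]; exact hq1
  have h1q : (0:ℝ) < 1 - q := by linarith
  have base : HasSum (fun n : ℕ => (((n + m).choose m : ℕ) : ℝ) * q ^ n)
      (1 / (1 - q) ^ (m + 1)) :=
    hasSum_choose_mul_geometric_of_norm_lt_one (𝕜 := ℝ) m hq
  have base2 := base.mul_left ((m : ℝ) * q * (1 - q) ^ m)
  have hfun : (fun n : ℕ =>
      (m : ℝ) * q * (1 - q) ^ m * ((((n + m).choose m : ℕ) : ℝ) * q ^ n))
      = fun n : ℕ => ((n : ℝ) + 1) * st15dd m q n := by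
    funext n
    have hnat : (n + m).choose m * m = (n + m).choose (m - 1) * (n + 1) := by
      have h1 : m - 1 + 1 = m := Nat.sub_add_cancel hm
      have h := Nat.choose_succ_right_eq (n + m) (m - 1)
      rw [h1] at h
      rw [h]
      congr 1
      omega
    have hcast : (((n + m).choose m : ℕ) : ℝ) * m
        = (((n + m).choose (m - 1) : ℕ) : ℝ) * ((n : ℝ) + 1) := by
      exact_mod_cast congrArg (Nat.cast : ℕ → ℝ) hnat
    unfold st15dd
    linear_combination (q ^ n * q * (1 - q) ^ m) * hcast
  rw [hfun] at base2
  convert base2 using 1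
  · rfl
  rw [pow_succ]
  have hne : ((1:ℝ) - q) ^ m ≠ 0 := (pow_pos h1q m).ne'
  field_simp

/-- First derivative series. -/
def st15gg (m : ℕ) (q : ℝ) (z : ℂ) : ℂ := ∑' n : ℕ, ((st15dd m q n : ℝ) : ℂ) * z ^ (n + 1)

/-- Second derivative series. -/
def st15hh (m : ℕ) (q : ℝ) (z : ℂ) : ℂ :=
  ∑' n : ℕ, ((n : ℂ) + 1) * ((st15dd m q n : ℝ) : ℂ) * z ^ n

lemma st15hasDerivAt_pascalG {m : ℕ} (hm : 1 ≤ m) {q : ℝ} (hq0 : 0 < q) (hq1 : q < 1)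
    {z : ℂ} (hz : z ∈ Metric.ball (0:ℂ) 1) :
    HasDerivAt (pascalG m q) (1 + st15gg m q z) z := by
  have hdd0 := st15dd_nonneg (m := m) hq0.le hq1.le
  have htsum : HasDerivAt (fun w : ℂ => ∑' n : ℕ,
      ((n + m).choose (m - 1) : ℂ) * (q : ℂ) ^ (n + 1) * (1 - (q : ℂ)) ^ m * w ^ (n + 2)
        / ((n : ℂ) + 2))
      (∑' n : ℕ, ((st15dd m q n : ℝ) : ℂ) * z ^ (n + 1)) z := by
    apply hasDerivAt_tsum_of_isPreconnected (u := st15dd m q)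
      (g' := fun n (y : ℂ) => ((st15dd m q n : ℝ) : ℂ) * y ^ (n + 1))
      (st15hasSum_dd hm hq0 hq1).summable Metric.isOpen_ball
      ((convex_ball (0:ℂ) 1).isPreconnected)
      ?_ ?_ (Metric.mem_ball_self one_pos) ?_ hz
    · intro n y _
      have h2 : ((n : ℂ) + 2) ≠ 0 := by
        have he : ((n : ℂ) + 2) = ((n + 2 : ℕ) : ℂ) := by push_cast; ring
        rw [he]
        exact Nat.cast_ne_zero.2 (by omega)
      have hd := ((hasDerivAt_pow (n + 2) y).const_mul
        (((n + m).choose (m - 1) : ℂ) * (q : ℂ) ^ (n + 1) * (1 - (q : ℂ)) ^ m)).div_const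
        ((n : ℂ) + 2)
      convert hd using 1
      · rfl
      rw [st15coeff_eq m q n]
      simp only [show n + 2 - 1 = n + 1 from rfl]
      push_cast
      field_simp
    · intro n y hy
      rw [mem_ball_zero_iff] at hy
      rw [norm_mul, norm_pow, Complex.norm_real, Real.norm_eq_abs,
        _root_.abs_of_nonneg (hdd0 n)]
      have h1 : ‖y‖ ^ (n + 1) ≤ 1 := pow_le_one₀ (norm_nonneg y) hy.le
      nlinarith [hdd0 n, pow_nonneg (norm_nonneg y) (n + 1)]
    · have hfun : (fun n : ℕ => ((n + m).choose (m - 1) : ℂ) * (q : ℂ) ^ (n + 1)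
          * (1 - (q : ℂ)) ^ m * (0:ℂ) ^ (n + 2) / ((n : ℂ) + 2)) = fun _ => 0 := by
        funext n
        rw [zero_pow (by omega : n + 2 ≠ 0)]
        ring
      rw [hfun]
      exact summable_zero
  have := (hasDerivAt_id z).add htsum
  unfold pascalG
  exact this

lemma st15hasDerivAt_gg {m : ℕ} (hm : 1 ≤ m) {q : ℝ} (hq0 : 0 < q) (hq1 : q < 1)
    {z : ℂ} (hz : z ∈ Metric.ball (0:ℂ) 1) :
    HasDerivAt (st15gg m q) (st15hh m q z) z := by
  have hdd0 := st15dd_nonneg (m := m) hq0.le hq1.le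
  apply hasDerivAt_tsum_of_isPreconnected (u := fun n : ℕ => ((n : ℝ) + 1) * st15dd m q n)
    (g' := fun n (y : ℂ) => ((n : ℂ) + 1) * ((st15dd m q n : ℝ) : ℂ) * y ^ n)
    (st15hasSum_dd' hm hq0 hq1).summable Metric.isOpen_ball
    ((convex_ball (0:ℂ) 1).isPreconnected)
    ?_ ?_ (Metric.mem_ball_self one_pos) ?_ hz
  · intro n y _
    have hd := (hasDerivAt_pow (n + 1) y).const_mul ((st15dd m q n : ℝ) : ℂ)
    convert hd using 1
    · rfl
    simp only [show n + 1 - 1 = n from rfl]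
    push_cast
    ring
  · intro n y hy
    rw [mem_ball_zero_iff] at hy
    show ‖((n : ℂ) + 1) * ((st15dd m q n : ℝ) : ℂ) * y ^ n‖ ≤ ((n : ℝ) + 1) * st15dd m q n
    have h1 : ‖((n : ℂ) + 1) * ((st15dd m q n : ℝ) : ℂ) * y ^ n‖
        = ((n : ℝ) + 1) * st15dd m q n * ‖y‖ ^ n := by
      rw [norm_mul, norm_mul, norm_pow, Complex.norm_real, Real.norm_eq_abs,
        _root_.abs_of_nonneg (hdd0 n)]
      congr 2
      have he : ((n : ℂ) + 1) = ((n + 1 : ℕ) : ℂ) := by push_cast; ring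
      rw [he, Complex.norm_natCast]
      push_cast
      ring
    rw [h1]
    have h2 : ‖y‖ ^ n ≤ 1 := pow_le_one₀ (norm_nonneg y) hy.le
    have h3 : (0:ℝ) ≤ ((n : ℝ) + 1) * st15dd m q n :=
      mul_nonneg (by positivity) (hdd0 n)
    nlinarith [mul_nonneg h3 (pow_nonneg (norm_nonneg y) n)]
  · have hfun : (fun n : ℕ => ((st15dd m q n : ℝ) : ℂ) * (0:ℂ) ^ (n + 1)) = fun _ => 0 := by
      funext n
      rw [zero_pow (by omega : n + 1 ≠ 0), mul_zero]
    rw [hfun]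
    exact summable_zero

lemma st15deriv_pascalG {m : ℕ} (hm : 1 ≤ m) {q : ℝ} (hq0 : 0 < q) (hq1 : q < 1)
    {z : ℂ} (hz : z ∈ Metric.ball (0:ℂ) 1) :
    deriv (pascalG m q) z = 1 + st15gg m q z :=
  (st15hasDerivAt_pascalG hm hq0 hq1 hz).deriv

lemma st15deriv2_pascalG {m : ℕ} (hm : 1 ≤ m) {q : ℝ} (hq0 : 0 < q) (hq1 : q < 1)
    {z : ℂ} (hz : z ∈ Metric.ball (0:ℂ) 1) :
    deriv (deriv (pascalG m q)) z = st15hh m q z := by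
  have hev : deriv (pascalG m q) =ᶠ[nhds z] fun w => 1 + st15gg m q w := by
    filter_upwards [Metric.isOpen_ball.mem_nhds hz] with w hw
    exact st15deriv_pascalG hm hq0 hq1 hw
  rw [hev.deriv_eq]
  exact ((st15hasDerivAt_gg hm hq0 hq1 hz).const_add 1).deriv

lemma st15norm_gg_le {m : ℕ} (hm : 1 ≤ m) {q : ℝ} (hq0 : 0 < q) (hq1 : q < 1)
    {z : ℂ} (hz : ‖z‖ ≤ 1) :
    ‖st15gg m q z‖ ≤ 1 - (1 - q) ^ m := by
  unfold st15gg
  apply tsum_of_norm_bounded (st15hasSum_dd hm hq0 hq1)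
  intro n
  show ‖((st15dd m q n : ℝ) : ℂ) * z ^ (n + 1)‖ ≤ st15dd m q n
  rw [norm_mul, norm_pow, Complex.norm_real, Real.norm_eq_abs,
    _root_.abs_of_nonneg (st15dd_nonneg hq0.le hq1.le n)]
  have h1 : ‖z‖ ^ (n + 1) ≤ 1 := pow_le_one₀ (norm_nonneg z) hz
  nlinarith [st15dd_nonneg (m := m) hq0.le hq1.le n, pow_nonneg (norm_nonneg z) (n + 1)]

lemma st15norm_hh_le {m : ℕ} (hm : 1 ≤ m) {q : ℝ} (hq0 : 0 < q) (hq1 : q < 1)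
    {z : ℂ} (hz : ‖z‖ ≤ 1) :
    ‖st15hh m q z‖ ≤ (m : ℝ) * q / (1 - q) := by
  unfold st15hh
  apply tsum_of_norm_bounded (st15hasSum_dd' hm hq0 hq1)
  intro n
  have hdd0 := st15dd_nonneg (m := m) hq0.le hq1.le
  show ‖((n : ℂ) + 1) * ((st15dd m q n : ℝ) : ℂ) * z ^ n‖ ≤ ((n : ℝ) + 1) * st15dd m q n
  have h1 : ‖((n : ℂ) + 1) * ((st15dd m q n : ℝ) : ℂ) * z ^ n‖
      = ((n : ℝ) + 1) * st15dd m q n * ‖z‖ ^ n := by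
    rw [norm_mul, norm_mul, norm_pow, Complex.norm_real, Real.norm_eq_abs,
      _root_.abs_of_nonneg (hdd0 n)]
    congr 2
    have he : ((n : ℂ) + 1) = ((n + 1 : ℕ) : ℂ) := by push_cast; ring
    rw [he, Complex.norm_natCast]
    push_cast
    ring
  rw [h1]
  have h2 : ‖z‖ ^ n ≤ 1 := pow_le_one₀ (norm_nonneg z) hz
  have h3 : (0:ℝ) ≤ ((n : ℝ) + 1) * st15dd m q n :=
    mul_nonneg (by positivity) (hdd0 n)
  nlinarith [mul_nonneg h3 (pow_nonneg (norm_nonneg z) n)]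

/-- Corollary 5, `𝒢_q^m ∈ 𝒦(ξ, γ)`. -/
theorem stmt15 (m : ℕ) (hm : 1 ≤ m) (q : ℝ) (hq0 : 0 < q) (hq1 : q < 1)
    (ξ γ : ℝ) (hξ : |ξ| < π / 2) (hγ0 : 0 ≤ γ) (hγ1 : γ < 1)
    (h : q * m * (Real.cos ξ)⁻¹ / (1 - q) ^ (m + 1) ≤ 1 - γ) :
    SpiralK0 ξ γ (pascalG m q) := by
  have h1q : (0:ℝ) < 1 - q := by linarith
  have ha : (0:ℝ) < (1 - q) ^ m := pow_pos h1q m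
  have hcos : 0 < Real.cos ξ := by
    have := abs_lt.1 hξ
    exact Real.cos_pos_of_mem_Ioo ⟨this.1, this.2⟩
  have hm0 : (0:ℝ) < (m : ℝ) := by exact_mod_cast Nat.lt_of_lt_of_le Nat.zero_lt_one hm
  have hB : (0:ℝ) < (m : ℝ) * q / (1 - q) := by positivity
  have hkey : (m : ℝ) * q / (1 - q) ≤ (1 - γ) * Real.cos ξ * (1 - q) ^ m := by
    have hp : (0:ℝ) < (1 - q) ^ (m + 1) := pow_pos h1q _
    have h2 : q * m * (Real.cos ξ)⁻¹ ≤ (1 - γ) * (1 - q) ^ (m + 1) := (div_le_iff₀ hp).1 h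
    have h3 : q * m ≤ (1 - γ) * (1 - q) ^ (m + 1) * Real.cos ξ := by
      have h4 := mul_le_mul_of_nonneg_right h2 hcos.le
      rwa [mul_assoc, inv_mul_cancel₀ hcos.ne', mul_one] at h4
    rw [div_le_iff₀ h1q]
    calc (m : ℝ) * q = q * m := by ring
      _ ≤ (1 - γ) * (1 - q) ^ (m + 1) * Real.cos ξ := h3
      _ = (1 - γ) * Real.cos ξ * (1 - q) ^ m * (1 - q) := by rw [pow_succ]; ring
  have hgg0 : st15gg m q 0 = 0 := by
    unfold st15gg
    have hfun : (fun n : ℕ => ((st15dd m q n : ℝ) : ℂ) * (0:ℂ) ^ (n + 1)) = fun _ => 0 := by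
      funext n
      rw [zero_pow (by omega : n + 1 ≠ 0), mul_zero]
    rw [hfun, tsum_zero]
  refine ⟨⟨?_, ?_, ?_⟩, ?_, ?_⟩
  · -- analytic
    exact DifferentiableOn.analyticOn
      (fun z hz => (st15hasDerivAt_pascalG hm hq0 hq1 hz).differentiableAt.differentiableWithinAt)
      Metric.isOpen_ball
  · -- value at 0
    unfold pascalG
    have hfun : (fun n : ℕ => ((n + m).choose (m - 1) : ℂ) * (q : ℂ) ^ (n + 1)
        * (1 - (q : ℂ)) ^ m * (0:ℂ) ^ (n + 2) / ((n : ℂ) + 2)) = fun _ => 0 := by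
      funext n
      rw [zero_pow (by omega : n + 2 ≠ 0)]
      ring
    rw [hfun, tsum_zero, add_zero]
  · -- derivative at 0
    have h0 : (0:ℂ) ∈ Metric.ball (0:ℂ) 1 := Metric.mem_ball_self one_pos
    rw [(st15hasDerivAt_pascalG hm hq0 hq1 h0).deriv, hgg0, add_zero]
  · -- injectivity
    intro z1 hz1 z2 hz2 hfe
    by_contra hne
    have hz1' : z1 ∈ Metric.ball (0:ℂ) 1 := hz1
    have hz2' : z2 ∈ Metric.ball (0:ℂ) 1 := hz2
    have hsub : z2 - z1 ≠ 0 := sub_ne_zero_of_ne (Ne.symm hne)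
    set L : ℝ → ℂ := fun t => z1 + (t : ℂ) * (z2 - z1) with hLdef
    have hmemL : ∀ t ∈ Set.Icc (0:ℝ) 1, L t ∈ Metric.ball (0:ℂ) 1 := by
      intro t ht
      have hc := (convex_ball (0:ℂ) 1) hz1' hz2'
        (by linarith [ht.2] : (0:ℝ) ≤ 1 - t) ht.1 (by ring)
      have he : (1 - t) • z1 + t • z2 = L t := by
        rw [hLdef]
        simp only [Complex.real_smul]
        push_cast
        ring
      rwa [he] at hc
    have hL' : ∀ t ∈ Set.uIcc (0:ℝ) 1, HasDerivAt (fun s : ℝ => pascalG m q (L s))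
        ((1 + st15gg m q (L t)) * (z2 - z1)) t := by
      intro t ht
      rw [Set.uIcc_of_le (by norm_num : (0:ℝ) ≤ 1)] at ht
      have hin : HasDerivAt (fun w : ℂ => z1 + w * (z2 - z1)) (z2 - z1) (t : ℂ) := by
        simpa using ((hasDerivAt_id ((t:ℝ) : ℂ)).mul_const (z2 - z1)).const_add z1
      have hout := (st15hasDerivAt_pascalG hm hq0 hq1 (hmemL t ht)).comp ((t:ℝ) : ℂ) hin
      exact hout.comp_ofReal
    have hcontgg : ∀ t ∈ Set.Icc (0:ℝ) 1, ContinuousAt (fun s : ℝ => st15gg m q (L s)) t := by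
      intro t ht
      have hca : ContinuousAt (st15gg m q) (L t) :=
        (st15hasDerivAt_gg hm hq0 hq1 (hmemL t ht)).differentiableAt.continuousAt
      have hcl : Continuous L := continuous_const.add (Complex.continuous_ofReal.mul continuous_const)
      exact hca.comp hcl.continuousAt
    have hIcont : ContinuousOn (fun t : ℝ => (1:ℂ) + st15gg m q (L t)) (Set.uIcc (0:ℝ) 1) := by
      rw [Set.uIcc_of_le (by norm_num : (0:ℝ) ≤ 1)]
      intro t ht
      exact (continuousAt_const.add (hcontgg t ht)).continuousWithinAt
    have hIint : IntervalIntegrable (fun t : ℝ => (1:ℂ) + st15gg m q (L t))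
        MeasureTheory.volume 0 1 := hIcont.intervalIntegrable
    have hint : IntervalIntegrable (fun t : ℝ => ((1:ℂ) + st15gg m q (L t)) * (z2 - z1))
        MeasureTheory.volume 0 1 := (hIcont.mul continuousOn_const).intervalIntegrable
    have hftc := intervalIntegral.integral_eq_sub_of_hasDerivAt hL' hint
    have hL1 : L 1 = z2 := by
      show z1 + ((1:ℝ) : ℂ) * (z2 - z1) = z2
      push_cast
      ring
    have hL0 : L 0 = z1 := by
      show z1 + ((0:ℝ) : ℂ) * (z2 - z1) = z1
      push_cast
      ring
    have hzero : (∫ t in (0:ℝ)..1, ((1:ℂ) + st15gg m q (L t)) * (z2 - z1)) = 0 := by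
      rw [hftc, hL1, hL0, hfe, sub_self]
    rw [intervalIntegral.integral_mul_const] at hzero
    have hI : (∫ t in (0:ℝ)..1, ((1:ℂ) + st15gg m q (L t))) = 0 :=
      (mul_eq_zero.1 hzero).resolve_right hsub
    have hre := Complex.reCLM.intervalIntegral_comp_comm hIint
    simp only [Complex.reCLM_apply] at hre
    rw [hI, Complex.zero_re] at hre
    have hlow : ∀ t ∈ Set.Icc (0:ℝ) 1, (1 - q) ^ m ≤ ((1:ℂ) + st15gg m q (L t)).re := by
      intro t ht
      have hb := st15norm_gg_le hm hq0 hq1 (le_of_lt (mem_ball_zero_iff.1 (hmemL t ht)))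
      have h5 : |(st15gg m q (L t)).re| ≤ ‖st15gg m q (L t)‖ := by
        exact Complex.abs_re_le_norm _
      have h6 := (abs_le.1 h5).1
      simp only [Complex.add_re, Complex.one_re]
      linarith
    have hreint : IntervalIntegrable (fun t : ℝ => ((1:ℂ) + st15gg m q (L t)).re)
        MeasureTheory.volume 0 1 := by
      apply ContinuousOn.intervalIntegrable
      exact Complex.continuous_re.comp_continuousOn hIcont
    have hmono := intervalIntegral.integral_mono_on (by norm_num : (0:ℝ) ≤ 1)
      intervalIntegrable_const hreint hlow
    simp only [intervalIntegral.integral_const, smul_eq_mul, sub_zero, one_mul] at hmono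
    rw [hre] at hmono
    linarith
  · -- the inequality
    intro z hz
    have hz' : z ∈ Metric.ball (0:ℂ) 1 := hz
    have hzlt : ‖z‖ < 1 := mem_ball_zero_iff.1 hz'
    have hd1 : deriv (pascalG m q) z = 1 + st15gg m q z :=
      (st15hasDerivAt_pascalG hm hq0 hq1 hz').deriv
    have hd2 : deriv (deriv (pascalG m q)) z = st15hh m q z :=
      st15deriv2_pascalG hm hq0 hq1 hz'
    have hgb : ‖st15gg m q z‖ ≤ 1 - (1 - q) ^ m := st15norm_gg_le hm hq0 hq1 hzlt.le
    have hDlb : (1 - q) ^ m ≤ ‖1 + st15gg m q z‖ := by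
      have h7 : ‖(1:ℂ)‖ ≤ ‖1 + st15gg m q z‖ + ‖st15gg m q z‖ := by
        calc ‖(1:ℂ)‖ = ‖(1 + st15gg m q z) + (-(st15gg m q z))‖ := by
              congr 1
              ring
          _ ≤ ‖1 + st15gg m q z‖ + ‖-(st15gg m q z)‖ := norm_add_le _ _
          _ = ‖1 + st15gg m q z‖ + ‖st15gg m q z‖ := by rw [norm_neg]
      rw [norm_one] at h7
      linarith
    have hDne : (1:ℂ) + st15gg m q z ≠ 0 := by
      intro h0
      rw [h0, norm_zero] at hDlb
      linarith
    have hNb : ‖z * st15hh m q z‖ < (m : ℝ) * q / (1 - q) := by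
      have hhb := st15norm_hh_le hm hq0 hq1 hzlt.le
      rw [norm_mul]
      calc ‖z‖ * ‖st15hh m q z‖ ≤ ‖z‖ * ((m : ℝ) * q / (1 - q)) :=
            mul_le_mul_of_nonneg_left hhb (norm_nonneg z)
        _ < 1 * ((m : ℝ) * q / (1 - q)) := by
            exact mul_lt_mul_of_pos_right hzlt hB
        _ = (m : ℝ) * q / (1 - q) := one_mul _
    constructor
    · rw [hd1]
      exact hDne
    · rw [hd1, hd2]
      have hwb : ‖z * st15hh m q z / (1 + st15gg m q z)‖ < (1 - γ) * Real.cos ξ := by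
        rw [norm_div]
        calc ‖z * st15hh m q z‖ / ‖1 + st15gg m q z‖
            ≤ ‖z * st15hh m q z‖ / (1 - q) ^ m := by gcongr
          _ < ((m : ℝ) * q / (1 - q)) / (1 - q) ^ m := by gcongr
          _ ≤ ((1 - γ) * Real.cos ξ * (1 - q) ^ m) / (1 - q) ^ m := by gcongr
          _ = (1 - γ) * Real.cos ξ := by field_simp
      set w : ℂ := z * st15hh m q z / (1 + st15gg m q z) with hwdef
      have hEre : (Complex.exp (Complex.I * (ξ : ℂ))).re = Real.cos ξ := by
        rw [mul_comm, Complex.exp_mul_I]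
        simp [Complex.add_re, Complex.mul_re, Complex.I_re, Complex.I_im,
          Complex.cos_ofReal_re, Complex.sin_ofReal_im]
      have hEabs : ‖Complex.exp (Complex.I * (ξ : ℂ))‖ = 1 := by
        rw [Complex.norm_exp]
        simp
      have hsplit : (Complex.exp (Complex.I * (ξ : ℂ)) * (1 + w)).re
          = Real.cos ξ + (Complex.exp (Complex.I * (ξ : ℂ)) * w).re := by
        rw [mul_add, mul_one, Complex.add_re, hEre]
      have h9 : |(Complex.exp (Complex.I * (ξ : ℂ)) * w).re|
          ≤ ‖Complex.exp (Complex.I * (ξ : ℂ)) * w‖ := by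
        exact Complex.abs_re_le_norm _
      rw [norm_mul, hEabs, one_mul] at h9
      have h10 := (abs_le.1 h9).1
      rw [hsplit]
      nlinarith [hwb, hcos]
end
end

section
/- Let m ≥ 2 be an integer, 0 < q < 1, |ξ| < π/2 and 0 ≤ γ < 1. If sec ξ · [ 1 - (1-q)^m ] + ((1-γ- sec ξ)/(q(m-1))) · [ (1-q) - (1-q)^m - q(m-1)(1-q)^m ] ≤ 1 - γ, then the integral operator 𝒢_q^m(z) = ∫_0^z Θ_q^m(t)/t dt belongs to the class 𝒮(ξ, γ). -/
noncomputable section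

open Complex Real Set

/-! ### Auxiliary material for `stmt16` -/

/-- Real Pascal coefficient. -/
def pcoef (k : ℕ) (q : ℝ) (n : ℕ) : ℝ :=
  ((n + (k + 2)).choose (k + 1) : ℝ) * q ^ (n + 1) * (1 - q) ^ (k + 2)

lemma pcoef_pos (k : ℕ) {q : ℝ} (hq0 : 0 < q) (hq1 : q < 1) (n : ℕ) : 0 < pcoef k q n := by
  unfold pcoef
  have h1 : 0 < (n + (k + 2)).choose (k + 1) := Nat.choose_pos (by omega)
  have h1' : (0:ℝ) < ((n + (k + 2)).choose (k + 1) : ℝ) := by exact_mod_cast h1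
  have h2 : (0:ℝ) < 1 - q := by linarith
  positivity

lemma hasSum_shift1 (k : ℕ) {q : ℝ} (hq0 : 0 < q) (hq1 : q < 1) :
    HasSum (fun n : ℕ => ((n + (k + 2)).choose (k + 1) : ℝ) * q ^ (n + 1))
      (1 / (1 - q) ^ (k + 2) - 1) := by
  have hqn : ‖q‖ < 1 := by rw [Real.norm_eq_abs, abs_lt]; constructor <;> linarith
  have h0 : HasSum (fun j : ℕ => ((j + (k + 1)).choose (k + 1) : ℝ) * q ^ j)
      (1 / (1 - q) ^ (k + 2)) := hasSum_choose_mul_geometric_of_norm_lt_one (k + 1) hqn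
  have h1 := (hasSum_nat_add_iff'
    (f := fun j : ℕ => ((j + (k + 1)).choose (k + 1) : ℝ) * q ^ j) 1).2 h0
  simp only [Finset.range_one, Finset.sum_singleton, zero_add, Nat.choose_self, Nat.cast_one,
    pow_zero, mul_one, one_mul] at h1
  have e : ∀ n : ℕ, n + (k + 2) = n + 1 + (k + 1) := fun n => by omega
  simpa only [e] using h1

lemma hasSum_shift2 (k : ℕ) {q : ℝ} (hq0 : 0 < q) (hq1 : q < 1) :
    HasSum (fun n : ℕ => ((n + (k + 3)).choose (k + 1) : ℝ) * q ^ (n + 2))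
      (1 / (1 - q) ^ (k + 2) - 1 - ((k : ℝ) + 2) * q) := by
  have hqn : ‖q‖ < 1 := by rw [Real.norm_eq_abs, abs_lt]; constructor <;> linarith
  have h0 : HasSum (fun j : ℕ => ((j + (k + 1)).choose (k + 1) : ℝ) * q ^ j)
      (1 / (1 - q) ^ (k + 2)) := hasSum_choose_mul_geometric_of_norm_lt_one (k + 1) hqn
  have h1 := (hasSum_nat_add_iff'
    (f := fun j : ℕ => ((j + (k + 1)).choose (k + 1) : ℝ) * q ^ j) 2).2 h0
  rw [Finset.sum_range_succ, Finset.sum_range_one] at h1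
  rw [show 1 + (k + 1) = k + 2 from by omega, Nat.choose_succ_self_right] at h1
  simp only [zero_add, Nat.choose_self, Nat.cast_one, pow_zero, one_mul, pow_one] at h1
  have e : ∀ n : ℕ, n + (k + 3) = n + 2 + (k + 1) := fun n => by omega
  have h2 : (1 / (1 - q) ^ (k + 2) - 1 - ((k : ℝ) + 2) * q)
      = 1 / (1 - q) ^ (k + 2) - (1 + ((k + 2 : ℕ) : ℝ) * q) := by push_cast; ring
  rw [h2]
  simpa only [e] using h1

lemma hasSum_pcoef (k : ℕ) {q : ℝ} (hq0 : 0 < q) (hq1 : q < 1) :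
    HasSum (pcoef k q) (1 - (1 - q) ^ (k + 2)) := by
  have hP : ((1:ℝ) - q) ^ (k + 2) ≠ 0 := by
    have : (0:ℝ) < 1 - q := by linarith
    positivity
  have h := (hasSum_shift1 k hq0 hq1).mul_right ((1 - q) ^ (k + 2))
  have hv : (1 / (1 - q) ^ (k + 2) - 1) * (1 - q) ^ (k + 2) = 1 - (1 - q) ^ (k + 2) := by
    field_simp
  unfold pcoef
  rwa [hv] at h

lemma hasSum_pcoef_div (k : ℕ) {q : ℝ} (hq0 : 0 < q) (hq1 : q < 1) :
    HasSum (fun n : ℕ => pcoef k q n / ((n : ℝ) + 2))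
      (((1 - q) - (1 - q) ^ (k + 2) - q * ((k : ℝ) + 1) * (1 - q) ^ (k + 2))
        / (q * ((k : ℝ) + 1))) := by
  have hq' : q ≠ 0 := hq0.ne'
  have h2 : HasSum (fun n : ℕ => ((n + (k + 3)).choose (k + 1) : ℝ) * q ^ (n + 1))
      ((1 / (1 - q) ^ (k + 2) - 1 - ((k : ℝ) + 2) * q) / q) := by
    have h := (hasSum_shift2 k hq0 hq1).mul_left q⁻¹
    have e : (fun n : ℕ => q⁻¹ * (((n + (k + 3)).choose (k + 1) : ℝ) * q ^ (n + 2)))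
        = fun n : ℕ => ((n + (k + 3)).choose (k + 1) : ℝ) * q ^ (n + 1) := by
      funext n; field_simp; ring
    rw [e] at h
    rwa [inv_mul_eq_div] at h
  have h1 := hasSum_shift1 k hq0 hq1
  have h3 : HasSum (fun n : ℕ => ((n + (k + 2)).choose k : ℝ) * q ^ (n + 1))
      ((1 / (1 - q) ^ (k + 2) - 1 - ((k : ℝ) + 2) * q) / q - (1 / (1 - q) ^ (k + 2) - 1)) := by
    have h := h2.sub h1
    have e : (fun n : ℕ => ((n + (k + 3)).choose (k + 1) : ℝ) * q ^ (n + 1)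
          - ((n + (k + 2)).choose (k + 1) : ℝ) * q ^ (n + 1))
        = fun n : ℕ => ((n + (k + 2)).choose k : ℝ) * q ^ (n + 1) := by
      funext n
      have hp : (n + (k + 3)).choose (k + 1)
          = (n + (k + 2)).choose k + (n + (k + 2)).choose (k + 1) := by
        rw [show n + (k + 3) = (n + (k + 2)) + 1 from by omega]
        exact Nat.choose_succ_succ' (n + (k + 2)) k
      rw [hp]; push_cast; ring
    rwa [e] at h
  have h4 := h3.mul_right ((1 - q) ^ (k + 2) / ((k : ℝ) + 1))
  have e2 : (fun n : ℕ =>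
        ((n + (k + 2)).choose k : ℝ) * q ^ (n + 1) * ((1 - q) ^ (k + 2) / ((k : ℝ) + 1)))
      = fun n : ℕ => pcoef k q n / ((n : ℝ) + 2) := by
    funext n
    have hnat := Nat.choose_succ_right_eq (n + (k + 2)) k
    rw [show n + (k + 2) - k = n + 2 from by omega] at hnat
    have hcast : ((n + (k + 2)).choose (k + 1) : ℝ) * ((k : ℝ) + 1)
        = ((n + (k + 2)).choose k : ℝ) * ((n : ℝ) + 2) := by exact_mod_cast hnat
    unfold pcoef
    have hk : ((k : ℝ) + 1) ≠ 0 := by positivity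
    have hn : ((n : ℝ) + 2) ≠ 0 := by positivity
    rw [show ((n + (k + 2)).choose k : ℝ) * q ^ (n + 1) * ((1 - q) ^ (k + 2) / ((k : ℝ) + 1))
        = (((n + (k + 2)).choose k : ℝ) * q ^ (n + 1) * (1 - q) ^ (k + 2)) / ((k : ℝ) + 1)
      from by ring, div_eq_div_iff hk hn]
    linear_combination (-(q ^ (n + 1) * (1 - q) ^ (k + 2))) * hcast
  rw [e2] at h4
  refine (congrArg (HasSum _) ?_).mpr h4
  have hP : (0:ℝ) < (1 - q) ^ (k + 2) := by
    have : (0:ℝ) < 1 - q := by linarith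
    positivity
  field_simp
  ring

lemma norm_pow_sub_pow_le' (x y : ℂ) {r : ℝ} (hx : ‖x‖ ≤ r) (hy : ‖y‖ ≤ r) (N : ℕ) :
    ‖x ^ N - y ^ N‖ ≤ (N : ℝ) * r ^ (N - 1) * ‖x - y‖ := by
  have hr0 : 0 ≤ r := le_trans (norm_nonneg x) hx
  rw [← geom_sum₂_mul, norm_mul]
  have hsum : ‖∑ i ∈ Finset.range N, x ^ i * y ^ (N - 1 - i)‖ ≤ (N : ℝ) * r ^ (N - 1) := by
    calc ‖∑ i ∈ Finset.range N, x ^ i * y ^ (N - 1 - i)‖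
        ≤ ∑ i ∈ Finset.range N, ‖x ^ i * y ^ (N - 1 - i)‖ := norm_sum_le _ _
      _ ≤ ∑ _i ∈ Finset.range N, r ^ (N - 1) := by
          apply Finset.sum_le_sum
          intro i hi
          rw [norm_mul, norm_pow, norm_pow]
          have hiN : i ≤ N - 1 := by
            have := Finset.mem_range.1 hi; omega
          calc ‖x‖ ^ i * ‖y‖ ^ (N - 1 - i) ≤ r ^ i * r ^ (N - 1 - i) := by
                apply mul_le_mul (pow_le_pow_left₀ (norm_nonneg x) hx i)
                  (pow_le_pow_left₀ (norm_nonneg y) hy _) (by positivity) (by positivity)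
            _ = r ^ (N - 1) := by rw [← pow_add]; congr 1; omega
      _ = (N : ℝ) * r ^ (N - 1) := by
          rw [Finset.sum_const, Finset.card_range, nsmul_eq_mul]
  exact mul_le_mul_of_nonneg_right hsum (norm_nonneg _)

lemma tsum_norm_bound {F : ℕ → ℂ} {w : ℕ → ℝ} (hw : Summable w) (hb : ∀ n, ‖F n‖ ≤ w n) :
    ‖∑' n, F n‖ ≤ ∑' n, w n := by
  have hs : Summable fun n => ‖F n‖ :=
    Summable.of_nonneg_of_le (fun n => norm_nonneg _) hb hw
  exact (norm_tsum_le_tsum_norm hs).trans (Summable.tsum_le_tsum hb hs hw)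

lemma pascalG_eq (k : ℕ) (q : ℝ) :
    pascalG (k + 2) q
      = fun z : ℂ => z + ∑' n : ℕ, (pcoef k q n : ℂ) * z ^ (n + 2) / ((n : ℂ) + 2) := by
  funext z
  unfold pascalG
  congr 1
  apply tsum_congr
  intro n
  unfold pcoef
  push_cast
  ring

set_option maxHeartbeats 1600000 in
/-- Corollary 6, `𝒢_q^m ∈ 𝒮(ξ, γ)`. -/
theorem stmt16 (m : ℕ) (hm : 2 ≤ m) (q : ℝ) (hq0 : 0 < q) (hq1 : q < 1)
    (ξ γ : ℝ) (hξ : |ξ| < π / 2) (hγ0 : 0 ≤ γ) (hγ1 : γ < 1)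
    (h : (Real.cos ξ)⁻¹ * (1 - (1 - q) ^ m)
        + (1 - γ - (Real.cos ξ)⁻¹) / (q * ((m : ℝ) - 1)) *
            ((1 - q) - (1 - q) ^ m - q * ((m : ℝ) - 1) * (1 - q) ^ m) ≤ 1 - γ) :
    SpiralS0 ξ γ (pascalG m q) := by
  obtain ⟨k, rfl⟩ : ∃ k, m = k + 2 := ⟨m - 2, by omega⟩
  -- basic positivity
  have hs0 : 0 < Real.cos ξ := by
    apply Real.cos_pos_of_mem_Ioo
    rw [abs_lt] at hξ
    exact ⟨hξ.1, hξ.2⟩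
  set s := Real.cos ξ with hs_def
  have hs1 : s ≤ 1 := Real.cos_le_one ξ
  -- real coefficient sums
  obtain ⟨A, hA_def⟩ : ∃ A : ℝ, A = ((1 - q) - (1 - q) ^ (k + 2)
      - q * ((k : ℝ) + 1) * (1 - q) ^ (k + 2)) / (q * ((k : ℝ) + 1)) := ⟨_, rfl⟩
  obtain ⟨C, hC_def⟩ : ∃ C : ℝ, C = 1 - (1 - q) ^ (k + 2) := ⟨_, rfl⟩
  have hsa : HasSum (fun n : ℕ => pcoef k q n / ((n : ℝ) + 2)) A := by
    rw [hA_def]; exact hasSum_pcoef_div k hq0 hq1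
  have hsc : HasSum (pcoef k q) C := by
    rw [hC_def]; exact hasSum_pcoef k hq0 hq1
  have hcpos : ∀ n, 0 < pcoef k q n := pcoef_pos k hq0 hq1
  have hapos : ∀ n : ℕ, 0 < pcoef k q n / ((n : ℝ) + 2) :=
    fun n => div_pos (hcpos n) (by positivity)
  have hApos : 0 < A := lt_of_lt_of_le (hapos 0) (le_hasSum hsa 0 fun j _ => (hapos j).le)
  have hterm : ∀ n : ℕ, pcoef k q n / ((n : ℝ) + 2) < pcoef k q n := by
    intro n
    apply div_lt_self (hcpos n)
    have : (0:ℝ) ≤ (n : ℝ) := Nat.cast_nonneg n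
    linarith
  have hsb : HasSum (fun n : ℕ => pcoef k q n - pcoef k q n / ((n : ℝ) + 2)) (C - A) :=
    hsc.sub hsa
  have hBpos : 0 < C - A := by
    refine lt_of_lt_of_le ?_ (le_hasSum hsb 0 fun j _ => by linarith [hterm j])
    linarith [hterm 0]
  -- the key coefficient inequality
  have hkey : s⁻¹ * C + (1 - γ - s⁻¹) * A ≤ 1 - γ := by
    have hm' : (((k + 2 : ℕ)) : ℝ) - 1 = (k : ℝ) + 1 := by push_cast; ring
    rw [hm'] at h
    calc s⁻¹ * C + (1 - γ - s⁻¹) * A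
        = s⁻¹ * (1 - (1 - q) ^ (k + 2)) + (1 - γ - s⁻¹) / (q * ((k : ℝ) + 1)) *
            ((1 - q) - (1 - q) ^ (k + 2) - q * ((k : ℝ) + 1) * (1 - q) ^ (k + 2)) := by
          rw [hA_def, hC_def]; ring
      _ ≤ 1 - γ := h
  have hsinv : 1 ≤ s⁻¹ := by
    calc (1:ℝ) = s * s⁻¹ := (mul_inv_cancel₀ hs0.ne').symm
      _ ≤ 1 * s⁻¹ := mul_le_mul_of_nonneg_right hs1 (inv_nonneg.2 hs0.le)
      _ = s⁻¹ := one_mul _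
  have h1 : s⁻¹ * (C - A) ≤ (1 - γ) * (1 - A) := by nlinarith [hkey]
  have hA1 : A < 1 := by nlinarith [h1, mul_pos (inv_pos.2 hs0) hBpos]
  have hBle : C - A ≤ (1 - γ) * s * (1 - A) := by
    have h2 := mul_le_mul_of_nonneg_left h1 hs0.le
    rw [← mul_assoc, mul_inv_cancel₀ hs0.ne', one_mul] at h2
    nlinarith [h2]
  have hC1 : C ≤ 1 := by nlinarith [hBle, hs1, hγ0, hA1, hs0]
  -- pass to the complex function
  rw [pascalG_eq k q]
  set F : ℂ → ℂ := fun z : ℂ =>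
    z + ∑' n : ℕ, (pcoef k q n : ℂ) * z ^ (n + 2) / ((n : ℂ) + 2) with hF_def
  have hzn : ∀ z : ℂ, z ∈ unitDisk → ‖z‖ < 1 := by
    intro z hz
    unfold unitDisk at hz
    simpa using mem_ball_zero_iff.1 hz
  have hnorm_nat : ∀ n : ℕ, ‖((n : ℂ) + 2)‖ = (n : ℝ) + 2 := by
    intro n
    rw [show ((n : ℂ) + 2) = (((n : ℝ) + 2 : ℝ) : ℂ) from by push_cast; ring,
      Complex.norm_real, Real.norm_eq_abs, abs_of_pos (by positivity)]
  have hnorm_coef : ∀ n : ℕ, ‖((pcoef k q n : ℝ) : ℂ)‖ = pcoef k q n := by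
    intro n
    rw [Complex.norm_real, Real.norm_eq_abs, abs_of_pos (hcpos n)]
  have hnrm : ∀ (z : ℂ) (n : ℕ), ‖(pcoef k q n : ℂ) * z ^ (n + 2) / ((n : ℂ) + 2)‖
      = pcoef k q n * ‖z‖ ^ (n + 2) / ((n : ℝ) + 2) := by
    intro z n
    rw [norm_div, norm_mul, norm_pow, hnorm_coef n, hnorm_nat n]
  -- summability of the complex series
  have hsum_pow : ∀ (z : ℂ), ‖z‖ ≤ 1 → ∀ j : ℕ,
      Summable (fun n : ℕ => (pcoef k q n : ℂ) * z ^ (n + j)) := by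
    intro z hz j
    apply Summable.of_norm_bounded hsc.summable
    intro n
    rw [norm_mul, norm_pow, hnorm_coef n]
    calc pcoef k q n * ‖z‖ ^ (n + j) ≤ pcoef k q n * 1 :=
          mul_le_mul_of_nonneg_left (pow_le_one₀ (norm_nonneg z) hz) (hcpos n).le
      _ = pcoef k q n := mul_one _
  have hsum_div : ∀ (z : ℂ), ‖z‖ ≤ 1 →
      Summable (fun n : ℕ => (pcoef k q n : ℂ) * z ^ (n + 2) / ((n : ℂ) + 2)) := by
    intro z hz
    apply Summable.of_norm_bounded hsc.summable
    intro n
    rw [hnrm z n]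
    have h1' : pcoef k q n * ‖z‖ ^ (n + 2) ≤ pcoef k q n * 1 :=
      mul_le_mul_of_nonneg_left (pow_le_one₀ (norm_nonneg z) hz) (hcpos n).le
    have h2' : (1:ℝ) ≤ (n : ℝ) + 2 := by
      have : (0:ℝ) ≤ (n : ℝ) := Nat.cast_nonneg n
      linarith
    rw [div_le_iff₀ (by positivity)]
    nlinarith [h1', (hcpos n).le]
  -- termwise derivatives
  have hgd : ∀ (n : ℕ) (y : ℂ), HasDerivAt
      (fun w : ℂ => (pcoef k q n : ℂ) * w ^ (n + 2) / ((n : ℂ) + 2))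
      ((pcoef k q n : ℂ) * y ^ (n + 1)) y := by
    intro n y
    have hne : ((n : ℂ) + 2) ≠ 0 := by
      rw [show ((n : ℂ) + 2) = ((n + 2 : ℕ) : ℂ) from by push_cast; ring]
      exact Nat.cast_ne_zero.2 (by omega)
    have hd := ((hasDerivAt_pow (n + 2) y).const_mul ((pcoef k q n : ℝ) : ℂ)).div_const
      ((n : ℂ) + 2)
    refine hd.congr_deriv ?_
    rw [show n + 2 - 1 = n + 1 from by omega]
    push_cast
    field_simp
  -- derivative of F on the disk
  have hder : ∀ z ∈ unitDisk, HasDerivAt F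
      (1 + ∑' n : ℕ, (pcoef k q n : ℂ) * z ^ (n + 1)) z := by
    intro z hz
    have ht : HasDerivAt
        (fun w : ℂ => ∑' n : ℕ, (pcoef k q n : ℂ) * w ^ (n + 2) / ((n : ℂ) + 2))
        (∑' n : ℕ, (pcoef k q n : ℂ) * z ^ (n + 1)) z := by
      refine hasDerivAt_tsum_of_isPreconnected hsc.summable ?_ ?_
        (fun n y _ => hgd n y) (fun n y hy => ?_) (show (0:ℂ) ∈ unitDisk from ?_) ?_ hz
      · unfold unitDisk; exact Metric.isOpen_ball
      · unfold unitDisk; exact (convex_ball (0:ℂ) 1).isPreconnected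
      · rw [norm_mul, norm_pow, hnorm_coef n]
        calc pcoef k q n * ‖y‖ ^ (n + 1) ≤ pcoef k q n * 1 :=
              mul_le_mul_of_nonneg_left (pow_le_one₀ (norm_nonneg y) (hzn y hy).le) (hcpos n).le
          _ = pcoef k q n := mul_one _
      · unfold unitDisk; exact Metric.mem_ball_self one_pos
      · refine (summable_congr (fun n => ?_)).2 summable_zero
        rw [zero_pow (by omega : n + 2 ≠ 0)]
        simp
    exact (hasDerivAt_id z).add ht
  have hderiv_eq : ∀ z ∈ unitDisk, deriv F z
      = 1 + ∑' n : ℕ, (pcoef k q n : ℂ) * z ^ (n + 1) :=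
    fun z hz => (hder z hz).deriv
  -- bound on ‖F z - z‖
  have hFz_sub : ∀ z : ℂ, ‖z‖ ≤ 1 → ‖F z - z‖ ≤ A * ‖z‖ ^ 2 := by
    intro z hz
    have e : F z - z = ∑' n : ℕ, (pcoef k q n : ℂ) * z ^ (n + 2) / ((n : ℂ) + 2) := by
      simp only [hF_def]
      rw [add_sub_cancel_left]
    rw [e]
    have hb : ∀ n : ℕ, ‖(pcoef k q n : ℂ) * z ^ (n + 2) / ((n : ℂ) + 2)‖
        ≤ pcoef k q n / ((n : ℝ) + 2) * ‖z‖ ^ 2 := by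
      intro n
      rw [hnrm z n]
      have hp : ‖z‖ ^ (n + 2) ≤ ‖z‖ ^ 2 :=
        pow_le_pow_of_le_one (norm_nonneg z) hz (by omega)
      calc pcoef k q n * ‖z‖ ^ (n + 2) / ((n : ℝ) + 2)
          ≤ pcoef k q n * ‖z‖ ^ 2 / ((n : ℝ) + 2) :=
            (div_le_div_iff_of_pos_right (by positivity)).2
              (mul_le_mul_of_nonneg_left hp (hcpos n).le)
        _ = pcoef k q n / ((n : ℝ) + 2) * ‖z‖ ^ 2 := by ring
    calc ‖∑' n : ℕ, (pcoef k q n : ℂ) * z ^ (n + 2) / ((n : ℂ) + 2)‖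
        ≤ ∑' n : ℕ, pcoef k q n / ((n : ℝ) + 2) * ‖z‖ ^ 2 :=
          tsum_norm_bound (hsa.summable.mul_right _) hb
      _ = A * ‖z‖ ^ 2 := by rw [tsum_mul_right, hsa.tsum_eq]
  -- lower bound on ‖F z‖
  have hFz_lb : ∀ z : ℂ, ‖z‖ ≤ 1 → ‖z‖ * (1 - A) ≤ ‖F z‖ := by
    intro z hz
    have h1' := hFz_sub z hz
    have h2' : ‖z‖ ≤ ‖F z‖ + ‖F z - z‖ := by
      calc ‖z‖ = ‖F z - (F z - z)‖ := by congr 1; ring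
        _ ≤ ‖F z‖ + ‖F z - z‖ := norm_sub_le _ _
    have h3' : ‖z‖ ^ 2 ≤ ‖z‖ := by nlinarith [norm_nonneg z, hz]
    have h4' : A * ‖z‖ ^ 2 ≤ A * ‖z‖ := mul_le_mul_of_nonneg_left h3' hApos.le
    linarith [h1', h2', h4']
  have hFne : ∀ z ∈ unitDisk, z ≠ 0 → F z ≠ 0 := by
    intro z hz hz0 hcon
    have hzlt := hzn z hz
    have hlb := hFz_lb z hzlt.le
    rw [hcon, norm_zero] at hlb
    have hzpos : 0 < ‖z‖ := norm_pos_iff.2 hz0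
    nlinarith [hlb, hzpos, hA1]
  -- bound on ‖z * F' z - F z‖
  have hdiff : ∀ z ∈ unitDisk, ‖z * deriv F z - F z‖ ≤ (C - A) * ‖z‖ ^ 2 := by
    intro z hz
    have hzle := (hzn z hz).le
    rw [hderiv_eq z hz]
    have e : z * (1 + ∑' n : ℕ, (pcoef k q n : ℂ) * z ^ (n + 1)) - F z
        = ∑' n : ℕ, ((pcoef k q n : ℂ) * z ^ (n + 2)
            - (pcoef k q n : ℂ) * z ^ (n + 2) / ((n : ℂ) + 2)) := by
      rw [Summable.tsum_sub (hsum_pow z hzle 2) (hsum_div z hzle)]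
      have e1 : z * ∑' n : ℕ, (pcoef k q n : ℂ) * z ^ (n + 1)
          = ∑' n : ℕ, (pcoef k q n : ℂ) * z ^ (n + 2) := by
        rw [← tsum_mul_left]
        apply tsum_congr
        intro n
        ring
      simp only [hF_def]
      rw [← e1]
      ring
    rw [e]
    have hb : ∀ n : ℕ, ‖(pcoef k q n : ℂ) * z ^ (n + 2)
        - (pcoef k q n : ℂ) * z ^ (n + 2) / ((n : ℂ) + 2)‖
        ≤ (pcoef k q n - pcoef k q n / ((n : ℝ) + 2)) * ‖z‖ ^ 2 := by
      intro n
      have e3 : (pcoef k q n : ℂ) * z ^ (n + 2)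
          - (pcoef k q n : ℂ) * z ^ (n + 2) / ((n : ℂ) + 2)
          = ((pcoef k q n : ℂ) - (pcoef k q n : ℂ) / ((n : ℂ) + 2)) * z ^ (n + 2) := by
        ring
      rw [e3, norm_mul, norm_pow]
      have e4 : ‖(pcoef k q n : ℂ) - (pcoef k q n : ℂ) / ((n : ℂ) + 2)‖
          = pcoef k q n - pcoef k q n / ((n : ℝ) + 2) := by
        rw [show (pcoef k q n : ℂ) - (pcoef k q n : ℂ) / ((n : ℂ) + 2)
            = (((pcoef k q n - pcoef k q n / ((n : ℝ) + 2) : ℝ)) : ℂ) from by push_cast; ring,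
          Complex.norm_real, Real.norm_eq_abs, abs_of_pos (by linarith [hterm n])]
      rw [e4]
      have hp : ‖z‖ ^ (n + 2) ≤ ‖z‖ ^ 2 :=
        pow_le_pow_of_le_one (norm_nonneg z) hzle (by omega)
      exact mul_le_mul_of_nonneg_left hp (by linarith [hterm n])
    calc ‖∑' n : ℕ, ((pcoef k q n : ℂ) * z ^ (n + 2)
            - (pcoef k q n : ℂ) * z ^ (n + 2) / ((n : ℂ) + 2))‖
        ≤ ∑' n : ℕ, (pcoef k q n - pcoef k q n / ((n : ℝ) + 2)) * ‖z‖ ^ 2 :=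
          tsum_norm_bound (hsb.summable.mul_right _) hb
      _ = (C - A) * ‖z‖ ^ 2 := by rw [tsum_mul_right, hsb.tsum_eq]
  -- injectivity
  have hinj : Set.InjOn F unitDisk := by
    intro z1 hz1' z2 hz2' hfe
    by_contra hne
    have hr0 : 0 ≤ max ‖z1‖ ‖z2‖ := le_trans (norm_nonneg z1) (le_max_left _ _)
    have hrlt : max ‖z1‖ ‖z2‖ < 1 := max_lt (hzn z1 hz1') (hzn z2 hz2')
    have hz12 : z1 - z2 ≠ 0 := sub_ne_zero.2 hne
    have hz12p : 0 < ‖z1 - z2‖ := norm_pos_iff.2 hz12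
    have e : (0:ℂ) = (z1 - z2) + ∑' n : ℕ,
        ((pcoef k q n : ℂ) * z1 ^ (n + 2) / ((n : ℂ) + 2)
          - (pcoef k q n : ℂ) * z2 ^ (n + 2) / ((n : ℂ) + 2)) := by
      rw [Summable.tsum_sub (hsum_div z1 (hzn z1 hz1').le) (hsum_div z2 (hzn z2 hz2').le)]
      have : F z1 - F z2 = 0 := by rw [hfe, sub_self]
      simp only [hF_def] at this
      linear_combination -this
    have hb : ∀ n : ℕ, ‖(pcoef k q n : ℂ) * z1 ^ (n + 2) / ((n : ℂ) + 2)
        - (pcoef k q n : ℂ) * z2 ^ (n + 2) / ((n : ℂ) + 2)‖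
        ≤ pcoef k q n * (max ‖z1‖ ‖z2‖) ^ (n + 1) * ‖z1 - z2‖ := by
      intro n
      have e3 : (pcoef k q n : ℂ) * z1 ^ (n + 2) / ((n : ℂ) + 2)
          - (pcoef k q n : ℂ) * z2 ^ (n + 2) / ((n : ℂ) + 2)
          = ((pcoef k q n : ℂ) / ((n : ℂ) + 2)) * (z1 ^ (n + 2) - z2 ^ (n + 2)) := by
        ring
      have e4 : ‖(pcoef k q n : ℂ) / ((n : ℂ) + 2)‖ = pcoef k q n / ((n : ℝ) + 2) := by
        rw [norm_div, hnorm_coef n, hnorm_nat n]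
      have hp := norm_pow_sub_pow_le' z1 z2 (le_max_left ‖z1‖ ‖z2‖) (le_max_right ‖z1‖ ‖z2‖)
        (n + 2)
      rw [show n + 2 - 1 = n + 1 from by omega] at hp
      rw [e3, norm_mul, e4]
      calc pcoef k q n / ((n : ℝ) + 2) * ‖z1 ^ (n + 2) - z2 ^ (n + 2)‖
          ≤ pcoef k q n / ((n : ℝ) + 2)
            * (((n + 2 : ℕ) : ℝ) * (max ‖z1‖ ‖z2‖) ^ (n + 1) * ‖z1 - z2‖) :=
            mul_le_mul_of_nonneg_left hp (hapos n).le
        _ = pcoef k q n * (max ‖z1‖ ‖z2‖) ^ (n + 1) * ‖z1 - z2‖ := by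
            have hn2 : ((n : ℝ) + 2) ≠ 0 := by positivity
            push_cast
            field_simp
    have hWs : Summable (fun n : ℕ => pcoef k q n * (max ‖z1‖ ‖z2‖) ^ (n + 1) * ‖z1 - z2‖) := by
      apply Summable.mul_right
      apply Summable.of_nonneg_of_le
        (fun n => mul_nonneg (hcpos n).le (by positivity)) (fun n => ?_) hsc.summable
      calc pcoef k q n * (max ‖z1‖ ‖z2‖) ^ (n + 1) ≤ pcoef k q n * 1 :=
            mul_le_mul_of_nonneg_left (pow_le_one₀ hr0 hrlt.le) (hcpos n).le
        _ = pcoef k q n := mul_one _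
    have hbound := tsum_norm_bound hWs hb
    have hW : ∑' n : ℕ, pcoef k q n * (max ‖z1‖ ‖z2‖) ^ (n + 1) * ‖z1 - z2‖
        ≤ C * max ‖z1‖ ‖z2‖ * ‖z1 - z2‖ := by
      rw [tsum_mul_right]
      apply mul_le_mul_of_nonneg_right _ (norm_nonneg _)
      have hss : Summable (fun n : ℕ => pcoef k q n * (max ‖z1‖ ‖z2‖) ^ (n + 1)) := by
        apply Summable.of_nonneg_of_le
          (fun n => mul_nonneg (hcpos n).le (by positivity)) (fun n => ?_) hsc.summable
        calc pcoef k q n * (max ‖z1‖ ‖z2‖) ^ (n + 1) ≤ pcoef k q n * 1 :=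
              mul_le_mul_of_nonneg_left (pow_le_one₀ hr0 hrlt.le) (hcpos n).le
          _ = pcoef k q n := mul_one _
      calc ∑' n : ℕ, pcoef k q n * (max ‖z1‖ ‖z2‖) ^ (n + 1)
          ≤ ∑' n : ℕ, pcoef k q n * max ‖z1‖ ‖z2‖ := by
            apply Summable.tsum_le_tsum _ hss (hsc.summable.mul_right _)
            intro n
            have : (max ‖z1‖ ‖z2‖) ^ (n + 1) ≤ max ‖z1‖ ‖z2‖ := by
              calc (max ‖z1‖ ‖z2‖) ^ (n + 1) ≤ (max ‖z1‖ ‖z2‖) ^ 1 :=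
                    pow_le_pow_of_le_one hr0 hrlt.le (by omega)
                _ = max ‖z1‖ ‖z2‖ := pow_one _
            exact mul_le_mul_of_nonneg_left this (hcpos n).le
        _ = C * max ‖z1‖ ‖z2‖ := by rw [tsum_mul_right, hsc.tsum_eq]
    have e5 : ‖z1 - z2‖ = ‖∑' n : ℕ,
        ((pcoef k q n : ℂ) * z1 ^ (n + 2) / ((n : ℂ) + 2)
          - (pcoef k q n : ℂ) * z2 ^ (n + 2) / ((n : ℂ) + 2))‖ := by
      rw [show z1 - z2 = -(∑' n : ℕ,
        ((pcoef k q n : ℂ) * z1 ^ (n + 2) / ((n : ℂ) + 2)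
          - (pcoef k q n : ℂ) * z2 ^ (n + 2) / ((n : ℂ) + 2))) from by linear_combination -e]
      rw [norm_neg]
    have hfinal : ‖z1 - z2‖ ≤ C * max ‖z1‖ ‖z2‖ * ‖z1 - z2‖ := by
      calc ‖z1 - z2‖ = _ := e5
        _ ≤ C * max ‖z1‖ ‖z2‖ * ‖z1 - z2‖ := le_trans hbound hW
    have hCpos : 0 < C := by linarith [hBpos, hApos]
    have h6 : C * max ‖z1‖ ‖z2‖ * ‖z1 - z2‖ ≤ max ‖z1‖ ‖z2‖ * ‖z1 - z2‖ := by
      apply mul_le_mul_of_nonneg_right _ (norm_nonneg _)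
      nlinarith [hC1, hr0, hCpos]
    have h7 : max ‖z1‖ ‖z2‖ * ‖z1 - z2‖ < 1 * ‖z1 - z2‖ :=
      mul_lt_mul_of_pos_right hrlt hz12p
    linarith [hfinal, h6, h7]
  -- assemble
  refine ⟨⟨?_, ?_, ?_⟩, hinj, ?_⟩
  · -- analytic
    have hdiffon : DifferentiableOn ℂ F unitDisk :=
      fun z hz => ((hder z hz).differentiableAt).differentiableWithinAt
    exact hdiffon.analyticOn (by unfold unitDisk; exact Metric.isOpen_ball)
  · -- F 0 = 0
    simp only [hF_def]
    have e : ∀ n : ℕ, (pcoef k q n : ℂ) * (0:ℂ) ^ (n + 2) / ((n : ℂ) + 2) = 0 := by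
      intro n
      rw [zero_pow (by omega : n + 2 ≠ 0)]
      simp
    rw [tsum_congr e, tsum_zero, add_zero]
  · -- deriv F 0 = 1
    have h0 : (0:ℂ) ∈ unitDisk := by unfold unitDisk; exact Metric.mem_ball_self one_pos
    rw [hderiv_eq 0 h0]
    have e : ∀ n : ℕ, (pcoef k q n : ℂ) * (0:ℂ) ^ (n + 1) = 0 := by
      intro n
      rw [zero_pow (by omega : n + 1 ≠ 0)]
      simp
    rw [tsum_congr e, tsum_zero, add_zero]
  · -- the spirallikeness inequality
    intro z hz hz0
    have hfz := hFne z hz hz0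
    refine ⟨hfz, ?_⟩
    have hzlt := hzn z hz
    have hzpos : 0 < ‖z‖ := norm_pos_iff.2 hz0
    have hFpos : 0 < ‖F z‖ := norm_pos_iff.2 hfz
    have hlb := hFz_lb z hzlt.le
    have hdb := hdiff z hz
    have hdlt : ‖z * deriv F z - F z‖ < (1 - γ) * s * ‖F z‖ := by
      have s1 : ‖z * deriv F z - F z‖ ≤ (C - A) * ‖z‖ ^ 2 := hdb
      have s2 : (C - A) * ‖z‖ ^ 2 < (C - A) * ‖z‖ := by
        have hzz : ‖z‖ ^ 2 < ‖z‖ := by nlinarith [hzpos, hzlt]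
        exact mul_lt_mul_of_pos_left hzz hBpos
      have s3 : (C - A) * ‖z‖ ≤ (1 - γ) * s * (1 - A) * ‖z‖ :=
        mul_le_mul_of_nonneg_right hBle (norm_nonneg z)
      have s4 : (1 - γ) * s * (1 - A) * ‖z‖ ≤ (1 - γ) * s * ‖F z‖ := by
        have hnn : (0:ℝ) ≤ (1 - γ) * s := by nlinarith [hs0.le]
        calc (1 - γ) * s * (1 - A) * ‖z‖ = (1 - γ) * s * (‖z‖ * (1 - A)) := by ring
          _ ≤ (1 - γ) * s * ‖F z‖ := mul_le_mul_of_nonneg_left hlb hnn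
      linarith
    have hexp_re : (Complex.exp (Complex.I * (ξ:ℂ))).re = s := by
      rw [mul_comm, Complex.exp_ofReal_mul_I_re]
    have hexp_norm : ‖Complex.exp (Complex.I * (ξ:ℂ))‖ = 1 := by
      rw [Complex.norm_exp]
      simp
    have hsplit : Complex.exp (Complex.I * (ξ:ℂ)) * (z * deriv F z) / F z
        = Complex.exp (Complex.I * (ξ:ℂ))
          + Complex.exp (Complex.I * (ξ:ℂ)) * (z * deriv F z - F z) / F z := by
      field_simp
      ring
    rw [hsplit, Complex.add_re, hexp_re]
    have hre2 : |(Complex.exp (Complex.I * (ξ:ℂ)) * (z * deriv F z - F z) / F z).re|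
        ≤ ‖z * deriv F z - F z‖ / ‖F z‖ := by
      calc |(Complex.exp (Complex.I * (ξ:ℂ)) * (z * deriv F z - F z) / F z).re|
          ≤ ‖Complex.exp (Complex.I * (ξ:ℂ)) * (z * deriv F z - F z) / F z‖ := by
            exact Complex.abs_re_le_norm _
        _ = ‖z * deriv F z - F z‖ / ‖F z‖ := by
            rw [norm_div, norm_mul, hexp_norm, one_mul]
    have hdivlt : ‖z * deriv F z - F z‖ / ‖F z‖ < (1 - γ) * s :=
      (div_lt_iff₀ hFpos).2 hdlt
    have := abs_le.1 hre2
    nlinarith [this.1, hdivlt]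
end
end

section
/- Let m ≥ 2 be an integer and 0 < q < 1. Then Σ_{n=2}^∞ (1/n) · C(n+m-2, m-1) q^{n-1} (1-q)^m = [ (1-q) - (1-q)^m - q(m-1)(1-q)^m ] / ( q(m-1) ). -/
noncomputable section

open Complex Real Set

/-- closed form of the coefficient sum arising from `𝒢_q^m`. -/
theorem stmt19 (m : ℕ) (hm : 2 ≤ m) (q : ℝ) (hq0 : 0 < q) (hq1 : q < 1) :
    ∑' n : ℕ,
      (1 / ((n : ℝ) + 2)) * ((n + m).choose (m - 1) : ℝ) * q ^ (n + 1) * (1 - q) ^ m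
      = ((1 - q) - (1 - q) ^ m - q * ((m : ℝ) - 1) * (1 - q) ^ m) / (q * ((m : ℝ) - 1)) := by
  obtain ⟨k, rfl⟩ : ∃ k, m = k + 2 := ⟨m - 2, by omega⟩
  have hqn : ‖q‖ < 1 := by rw [Real.norm_eq_abs, abs_lt]; constructor <;> linarith
  have h1q : (1 : ℝ) - q ≠ 0 := by linarith
  have hk1 : ((k : ℝ) + 1) ≠ 0 := by positivity
  set f : ℕ → ℝ := fun n => ((n + k).choose k : ℝ) * q ^ n with hf
  have hsum : Summable f := summable_choose_mul_geometric_of_norm_lt_one k hqn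
  have hS : ∑' n, f n = 1 / (1 - q) ^ (k + 1) :=
    tsum_choose_mul_geometric_of_norm_lt_one k hqn
  have hshift : ∑ i ∈ Finset.range 2, f i + ∑' n, f (n + 2) = ∑' n, f n :=
    hsum.sum_add_tsum_nat_add 2
  have hrange : ∑ i ∈ Finset.range 2, f i = 1 + ((k : ℝ) + 1) * q := by
    simp [hf, Finset.sum_range_succ, Nat.add_comm 1 k, Nat.choose_succ_self_right]
  have htail : ∑' n, f (n + 2) = 1 / (1 - q) ^ (k + 1) - (1 + ((k : ℝ) + 1) * q) := by
    rw [← hS, ← hshift, hrange]; ring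
  set c : ℝ := (1 - q) ^ (k + 2) / (((k : ℝ) + 1) * q) with hc
  have hterm : ∀ n : ℕ,
      (1 / ((n : ℝ) + 2)) * ((n + (k + 2)).choose (k + 2 - 1) : ℝ) * q ^ (n + 1) * (1 - q) ^ (k + 2)
        = c * f (n + 2) := by
    intro n
    have hnat : (n + (k + 2)).choose (k + 1) * (k + 1) = (n + 2 + k).choose k * (n + 2) := by
      have := Nat.choose_succ_right_eq (n + (k + 2)) k
      have h2 : n + (k + 2) - k = n + 2 := by omega
      rw [h2] at this
      rw [show n + 2 + k = n + (k + 2) by omega]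
      exact this
    have hR : ((n + (k + 2)).choose (k + 1) : ℝ) * ((k : ℝ) + 1)
        = ((n + 2 + k).choose k : ℝ) * ((n : ℝ) + 2) := by exact_mod_cast hnat
    have hn2 : ((n : ℝ) + 2) ≠ 0 := by positivity
    have he : (k + 2 - 1) = k + 1 := by omega
    rw [he, hc, hf]
    have hq2 : q ^ (n + 2) = q ^ (n + 1) * q := by ring
    field_simp [hq2]
    linear_combination (q ^ (n + 1) * q) * hR
  rw [tsum_congr hterm, tsum_mul_left, htail, hc]
  have hpow : (1 - q) ^ (k + 2) = (1 - q) ^ (k + 1) * (1 - q) := by ring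
  have hp1 : ((1 : ℝ) - q) ^ (k + 1) ≠ 0 := pow_ne_zero _ h1q
  push_cast
  rw [hpow]
  generalize hP : ((1 : ℝ) - q) ^ (k + 1) = P at hp1 ⊢
  rw [show ((k:ℝ) + 2 - 1) = (k:ℝ) + 1 by ring, eq_div_iff (by positivity : q * ((k : ℝ) + 1) ≠ 0)]
  field_simp
  ring
end
end
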